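/- arXiv:1409.5862 — 6 statements merged into one kernel-verified Lean document; each statement's English description precedes it below -/
import Mathlib

section
/- Let 1 < p < ∞ and ω : [0,1] → [0,∞) be measurable with A := ∫₀¹ t^{-n/p} ω(t) dt < ∞. Then for every f ∈ L^p(ℝⁿ), the weighted Hardy operator H_ω f(x) = ∫₀¹ f(tx) ω(t) dt satisfies ‖H_ω f‖_{L^p(ℝⁿ)} ≤ A · ‖f‖_{L^p(ℝⁿ)}. -/
open MeasureTheory Set
open scoped ENNReal NNReal

/-- Sufficiency part of Theorem A: if `A = ∫₀¹ t^{-n/p} ω(t) dt < ∞`, then the weighted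
Hardy operator `H_ω f (x) = ∫₀¹ f(tx) ω(t) dt` is bounded on `L^p(ℝⁿ)` with norm `≤ A`. -/
theorem weighted_hardy_Lp_bound (n : ℕ) (p : ℝ) (hp : 1 < p) (ω : ℝ → ℝ)
    (hωm : Measurable ω) (hωnn : ∀ t ∈ Icc (0:ℝ) 1, 0 ≤ ω t)
    (hA : IntegrableOn (fun t => t ^ (-(n:ℝ)/p) * ω t) (Ioo 0 1))
    (f : EuclideanSpace ℝ (Fin n) → ℂ) (hf : MemLp f (ENNReal.ofReal p) volume) :
    eLpNorm (fun x => ∫ t in Ioo (0:ℝ) 1, ω t • f (t • x)) (ENNReal.ofReal p) volume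
      ≤ ENNReal.ofReal (∫ t in Ioo (0:ℝ) 1, t ^ (-(n:ℝ)/p) * ω t) *
        eLpNorm f (ENNReal.ofReal p) volume := by
  classical
  have hp0 : (0:ℝ) < p := one_pos.trans hp
  have hpne : p ≠ 0 := hp0.ne'
  set q : ℝ := p / (p - 1) with hqdef
  have hpq : p.HolderConjugate q := (Real.holderConjugate_iff_eq_conjExponent hp).2 rfl
  have hqp : q.HolderConjugate p := hpq.symm
  set S : Set ℝ := Ioo 0 1 with hSdef
  have hS : MeasurableSet S := measurableSet_Ioo
  -- measurable representative of f
  obtain ⟨g, hgsm, hfg⟩ : ∃ g : EuclideanSpace ℝ (Fin n) → ℂ,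
      StronglyMeasurable g ∧ f =ᵐ[volume] g :=
    ⟨hf.1.mk f, hf.1.stronglyMeasurable_mk, hf.1.ae_eq_mk⟩
  have hgm : Measurable g := hgsm.measurable
  have hsmul_meas : Measurable fun z : ℝ × EuclideanSpace ℝ (Fin n) => z.1 • z.2 :=
    (continuous_fst.smul continuous_snd).measurable
  -- transfer the a.e. equality f = g through scaling
  obtain ⟨N, hNsub, hNm, hN0⟩ : ∃ N, {y | f y ≠ g y} ⊆ N ∧ MeasurableSet N ∧ volume N = 0 :=
    ⟨toMeasurable volume {y | f y ≠ g y}, subset_toMeasurable _ _,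
      measurableSet_toMeasurable _ _, by rw [measure_toMeasurable]; exact ae_iff.mp hfg⟩
  have hT0 : ((volume.restrict S).prod volume)
      {z : ℝ × EuclideanSpace ℝ (Fin n) | z.1 • z.2 ∈ N} = 0 := by
    have hTm : MeasurableSet {z : ℝ × EuclideanSpace ℝ (Fin n) | z.1 • z.2 ∈ N} :=
      hsmul_meas hNm
    rw [Measure.prod_apply hTm]
    have h0 : ∀ᵐ t ∂(volume.restrict S),
        volume (Prod.mk t ⁻¹' {z : ℝ × EuclideanSpace ℝ (Fin n) | z.1 • z.2 ∈ N}) = 0 := by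
      filter_upwards [ae_restrict_mem hS] with t ht
      have : Prod.mk t ⁻¹' {z : ℝ × EuclideanSpace ℝ (Fin n) | z.1 • z.2 ∈ N}
          = (t • ·) ⁻¹' N := rfl
      rw [this, Measure.addHaar_preimage_smul volume (ne_of_gt ht.1), hN0, mul_zero]
    rw [lintegral_congr_ae h0, lintegral_zero]
  have haeρ : ∀ᵐ z ∂((volume.restrict S).prod volume), f (z.1 • z.2) = g (z.1 • z.2) := by
    rw [ae_iff]
    exact measure_mono_null (fun z hz => hNsub hz) hT0
  have haex : ∀ᵐ x ∂(volume : Measure (EuclideanSpace ℝ (Fin n))),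
      ∀ᵐ t ∂(volume.restrict S), f (t • x) = g (t • x) := by
    have h1 : Measure.map Prod.swap
        ((volume : Measure (EuclideanSpace ℝ (Fin n))).prod (volume.restrict S))
        = (volume.restrict S).prod volume := Measure.prod_swap
    have h2 := Measure.tendsto_ae_map (μ :=
      (volume : Measure (EuclideanSpace ℝ (Fin n))).prod (volume.restrict S))
      measurable_swap.aemeasurable
    rw [h1] at h2
    exact Measure.ae_ae_of_ae_prod (h2.eventually haeρ)
  -- replace f by g in the statement
  have hHcongr : (fun x => ∫ t in S, ω t • f (t • x)) =ᵐ[volume]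
      (fun x => ∫ t in S, ω t • g (t • x)) := by
    filter_upwards [haex] with x hx
    refine integral_congr_ae (hx.mono fun t ht => ?_)
    show ω t • f (t • x) = ω t • g (t • x)
    rw [ht]
  rw [eLpNorm_congr_ae hHcongr, eLpNorm_congr_ae hfg]
  -- notation
  set w : ℝ → ℝ≥0∞ := fun t => ENNReal.ofReal (t ^ (-(n:ℝ)/p) * ω t) with hw
  have hwmeas : Measurable w := ((measurable_id.pow_const _).mul hωm).ennreal_ofReal
  set A : ℝ≥0∞ := ENNReal.ofReal (∫ t in S, t ^ (-(n:ℝ)/p) * ω t) with hAdef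
  have hA' : ∫⁻ t in S, w t = A := by
    rw [hAdef, ofReal_integral_eq_lintegral_ofReal hA ?_]
    filter_upwards [ae_restrict_mem hS] with t ht
    exact mul_nonneg (Real.rpow_nonneg ht.1.le _) (hωnn t ⟨ht.1.le, ht.2.le⟩)
  set L : ℝ≥0∞ := ∫⁻ y, (‖g y‖₊ : ℝ≥0∞) ^ p with hL
  set J : EuclideanSpace ℝ (Fin n) → ℝ≥0∞ := fun x =>
    ∫⁻ t in S, w t * (ENNReal.ofReal (t ^ (n:ℝ)) * (‖g (t • x)‖₊ : ℝ≥0∞) ^ p) with hJ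
  -- pointwise bound
  have key : ∀ x : EuclideanSpace ℝ (Fin n),
      (‖∫ t in S, ω t • g (t • x)‖₊ : ℝ≥0∞) ^ p ≤ A ^ (p / q) * J x := by
    intro x
    have hgx : Measurable fun t : ℝ => (‖g (t • x)‖₊ : ℝ≥0∞) :=
      (hgm.comp (measurable_id.smul_const x)).enorm
    have step1 : (‖∫ t in S, ω t • g (t • x)‖₊ : ℝ≥0∞)
        ≤ ∫⁻ t in S, ENNReal.ofReal (ω t) * ‖g (t • x)‖₊ := by
      refine (enorm_integral_le_lintegral_enorm _).trans ?_
      refine le_of_eq (setLIntegral_congr_fun hS (fun t ht => ?_))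
      rw [enorm_smul, Real.enorm_eq_ofReal (hωnn t ⟨ht.1.le, ht.2.le⟩), enorm_eq_nnnorm]
    have step2 : ∫⁻ t in S, ENNReal.ofReal (ω t) * ‖g (t • x)‖₊
        ≤ A ^ (1/q) * (J x) ^ (1/p) := by
      have hsplit : ∀ t ∈ S, ENNReal.ofReal (ω t) * (‖g (t • x)‖₊ : ℝ≥0∞)
          = ((fun t => w t ^ (1/q)) * fun t => w t ^ (1/p) *
              (ENNReal.ofReal (t ^ ((n:ℝ)/p)) * ‖g (t • x)‖₊)) t := by
        intro t ht
        simp only [Pi.mul_apply]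
        rw [← mul_assoc, ← ENNReal.rpow_add_of_nonneg _ _ hqp.one_div_nonneg hpq.one_div_nonneg]
        have h1 : 1/q + 1/p = 1 := by
          rw [one_div, one_div]; exact hqp.inv_add_inv_eq_one
        rw [h1, ENNReal.rpow_one]
        simp only [hw]
        rw [← mul_assoc, ← ENNReal.ofReal_mul (mul_nonneg (Real.rpow_nonneg ht.1.le _)
          (hωnn t ⟨ht.1.le, ht.2.le⟩))]
        rw [mul_right_comm, ← Real.rpow_add ht.1, neg_div, neg_add_cancel,
          Real.rpow_zero, one_mul]

      calc ∫⁻ t in S, ENNReal.ofReal (ω t) * ‖g (t • x)‖₊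
          = ∫⁻ t in S, ((fun t => w t ^ (1/q)) * fun t => w t ^ (1/p) *
              (ENNReal.ofReal (t ^ ((n:ℝ)/p)) * ‖g (t • x)‖₊)) t :=
            setLIntegral_congr_fun hS hsplit
        _ ≤ (∫⁻ t in S, (w t ^ (1/q)) ^ q) ^ (1/q) *
            (∫⁻ t in S, (w t ^ (1/p) *
              (ENNReal.ofReal (t ^ ((n:ℝ)/p)) * ‖g (t • x)‖₊)) ^ p) ^ (1/p) :=
            ENNReal.lintegral_mul_le_Lp_mul_Lq _ hqp
              (hwmeas.pow_const _).aemeasurable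
              ((hwmeas.pow_const _).mul
                (((measurable_id.pow_const _).ennreal_ofReal).mul hgx)).aemeasurable
        _ = A ^ (1/q) * (J x) ^ (1/p) := by
            congr 1
            · rw [← hA']
              congr 1
              refine setLIntegral_congr_fun hS (fun t ht => ?_)
              rw [← ENNReal.rpow_mul, one_div, inv_mul_cancel₀ hqp.ne_zero, ENNReal.rpow_one]
            · rw [hJ]
              congr 1
              refine setLIntegral_congr_fun hS (fun t ht => ?_)
              rw [ENNReal.mul_rpow_of_nonneg _ _ hp0.le, ENNReal.mul_rpow_of_nonneg _ _ hp0.le,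
                ← ENNReal.rpow_mul, one_div, inv_mul_cancel₀ hpne, ENNReal.rpow_one,
                ENNReal.ofReal_rpow_of_pos (Real.rpow_pos_of_pos ht.1 _),
                ← Real.rpow_mul ht.1.le, div_mul_cancel₀ _ hpne]
    calc (‖∫ t in S, ω t • g (t • x)‖₊ : ℝ≥0∞) ^ p
        ≤ (A ^ (1/q) * (J x) ^ (1/p)) ^ p :=
          ENNReal.rpow_le_rpow (step1.trans step2) hp0.le
      _ = A ^ (p/q) * J x := by
          rw [ENNReal.mul_rpow_of_nonneg _ _ hp0.le, ← ENNReal.rpow_mul,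
            ← ENNReal.rpow_mul, one_div_mul_eq_div, div_mul_eq_mul_div, one_mul,
            div_self hpne, ENNReal.rpow_one]
  -- Tonelli + change of variables
  have hJint : ∫⁻ x, J x ∂volume = A * L := by
    have hFm : Measurable (Function.uncurry fun (t : ℝ) (x : EuclideanSpace ℝ (Fin n)) =>
        w t * (ENNReal.ofReal (t ^ (n:ℝ)) * (‖g (t • x)‖₊ : ℝ≥0∞) ^ p)) := by
      exact (hwmeas.comp measurable_fst).mul
        (((measurable_fst.pow_const _).ennreal_ofReal).mul
          ((hgm.comp hsmul_meas).enorm.pow_const _))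
    have hswap := lintegral_lintegral_swap (μ := volume.restrict S)
      (ν := (volume : Measure (EuclideanSpace ℝ (Fin n)))) hFm.aemeasurable
    rw [hJ]
    simp only []
    rw [← hswap]
    have hinner : ∀ᵐ t ∂(volume.restrict S),
        (∫⁻ x, w t * (ENNReal.ofReal (t ^ (n:ℝ)) * (‖g (t • x)‖₊ : ℝ≥0∞) ^ p) ∂volume)
          = w t * L := by
      filter_upwards [ae_restrict_mem hS] with t ht
      have ht0 : t ≠ 0 := ne_of_gt ht.1
      have hm1 : Measurable fun x : EuclideanSpace ℝ (Fin n) => (‖g (t • x)‖₊ : ℝ≥0∞) ^ p :=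
        (hgm.comp (measurable_const_smul t)).enorm.pow_const _
      rw [lintegral_const_mul _ (hm1.const_mul _),
        lintegral_const_mul _ hm1]
      have hchg : ∫⁻ x, (‖g (t • x)‖₊ : ℝ≥0∞) ^ p ∂volume
          = ENNReal.ofReal |(t ^ Module.finrank ℝ (EuclideanSpace ℝ (Fin n)))⁻¹| * L := by
        have hmap := lintegral_map (μ := (volume : Measure (EuclideanSpace ℝ (Fin n))))
          (hgm.nnnorm.coe_nnreal_ennreal.pow_const p) (measurable_const_smul t)
        rw [← hmap, Measure.map_addHaar_smul volume ht0, lintegral_smul_measure, hL, smul_eq_mul]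
      have hfr : Module.finrank ℝ (EuclideanSpace ℝ (Fin n)) = n := finrank_euclideanSpace_fin
      rw [hchg, hfr]
      have hc : ENNReal.ofReal (t ^ (n:ℝ)) * ENNReal.ofReal |((t:ℝ) ^ n)⁻¹| = 1 := by
        rw [abs_inv, abs_of_pos (pow_pos ht.1 n), Real.rpow_natCast,
          ← ENNReal.ofReal_mul (pow_pos ht.1 n).le, mul_inv_cancel₀ (pow_ne_zero n ht0),
          ENNReal.ofReal_one]
      rw [show (ENNReal.ofReal (t ^ (n:ℝ)) * (ENNReal.ofReal |((t:ℝ) ^ n)⁻¹| * L))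
          = (ENNReal.ofReal (t ^ (n:ℝ)) * ENNReal.ofReal |((t:ℝ) ^ n)⁻¹|) * L from by ring,
        hc, one_mul]
    rw [lintegral_congr_ae hinner, lintegral_mul_const _ hwmeas, hA']
  have hpE : (ENNReal.ofReal p) ≠ 0 := by
    simp [ENNReal.ofReal_eq_zero, not_le, hp0]
  have hkey2 : ∫⁻ x, (‖∫ t in S, ω t • g (t • x)‖₊ : ℝ≥0∞) ^ p ∂volume
      ≤ A ^ (p/q) * (A * L) := by
    calc ∫⁻ x, (‖∫ t in S, ω t • g (t • x)‖₊ : ℝ≥0∞) ^ p ∂volume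
        ≤ ∫⁻ x, A ^ (p/q) * J x ∂volume := lintegral_mono key
      _ = A ^ (p/q) * ∫⁻ x, J x ∂volume := lintegral_const_mul' _ _
          (ENNReal.rpow_ne_top_of_nonneg (div_nonneg hp0.le hpq.symm.nonneg)
            ENNReal.ofReal_ne_top)
      _ = A ^ (p/q) * (A * L) := by rw [hJint]
  rw [eLpNorm_eq_lintegral_rpow_enorm_toReal hpE ENNReal.ofReal_ne_top,
      eLpNorm_eq_lintegral_rpow_enorm_toReal hpE ENNReal.ofReal_ne_top,
      ENNReal.toReal_ofReal hp0.le]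
  have hpq1 : p / q + 1 = p := by
    rw [hpq.div_conj_eq_sub_one]; ring
  calc (∫⁻ x, (‖∫ t in S, ω t • g (t • x)‖₊ : ℝ≥0∞) ^ p ∂volume) ^ (1/p)
      ≤ (A ^ (p/q) * (A * L)) ^ (1/p) :=
        ENNReal.rpow_le_rpow hkey2 (by positivity)
    _ = A * L ^ (1/p) := by
        have hAA : A ^ (p/q) * A = A ^ p := by
          calc A ^ (p/q) * A = A ^ (p/q) * A ^ (1:ℝ) := by rw [ENNReal.rpow_one]
            _ = A ^ (p/q + 1) := (ENNReal.rpow_add_of_nonneg _ _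
                (div_nonneg hp0.le hpq.symm.nonneg) zero_le_one).symm
            _ = A ^ p := by rw [hpq1]
        rw [← mul_assoc, hAA, ENNReal.mul_rpow_of_nonneg _ _ (by positivity),
          ← ENNReal.rpow_mul, mul_one_div, div_self hpne, ENNReal.rpow_one]
end

section
/- For 1 < p < ∞, the classical Hardy operator H f(x) = (1/x)∫₀ˣ f(t) dt satisfies ‖Hf‖_{L^p(ℝ)} ≤ (p/(p-1)) ‖f‖_{L^p(ℝ)} for all f ∈ L^p(ℝ), and the constant p/(p-1) is the best possible. -/
open MeasureTheory Set
open scoped ENNReal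

lemma eLpNorm_eq_lintegral_rpow_nnnorm {α F : Type*} [MeasurableSpace α] {μ : Measure α}
    [NormedAddCommGroup F] {p : ℝ≥0∞} (hp_ne_zero : p ≠ 0) (hp_ne_top : p ≠ ⊤) {f : α → F} :
    eLpNorm f p μ = (∫⁻ x, (‖f x‖₊ : ℝ≥0∞) ^ p.toReal ∂μ) ^ (1 / p.toReal) :=
  eLpNorm_eq_lintegral_rpow_enorm_toReal hp_ne_zero hp_ne_top

lemma ofReal_norm_eq_coe_nnnorm {F : Type*} [NormedAddCommGroup F] (a : F) :
    ENNReal.ofReal ‖a‖ = (‖a‖₊ : ℝ≥0∞) := by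
  simp only [ENNReal.ofReal, norm_toNNReal]

lemma L1 {r : ℝ} (hr : -1 < r) :
    ∫⁻ t in Ioo (0:ℝ) 1, ENNReal.ofReal (t ^ r) = ENNReal.ofReal (1/(r+1)) := by
  rw [restrict_Ioo_eq_restrict_Ioc]
  have hint : IntegrableOn (fun t : ℝ => t ^ r) (Ioc 0 1) volume := by
    rw [← intervalIntegrable_iff_integrableOn_Ioc_of_le zero_le_one]
    exact intervalIntegral.intervalIntegrable_rpow' hr
  rw [← ofReal_integral_eq_lintegral_ofReal hint]
  · congr 1
    have := integral_rpow (a := 0) (b := 1) (Or.inl hr)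
    rw [intervalIntegral.integral_of_le zero_le_one] at this
    rw [this, Real.one_rpow, Real.zero_rpow (by linarith), one_div]
    ring
  · filter_upwards [ae_restrict_mem measurableSet_Ioc] with t ht
    exact Real.rpow_nonneg ht.1.le r

lemma L2 {t : ℝ} (ht : 0 < t) (g : ℝ → ℝ≥0∞) (hg : Measurable g) :
    ∫⁻ x, g (t * x) = ENNReal.ofReal t⁻¹ * ∫⁻ y, g y := by
  rw [← lintegral_map hg (measurable_const_mul t), Real.map_volume_mul_left (ne_of_gt ht),
    lintegral_smul_measure, abs_of_pos (inv_pos.mpr ht), smul_eq_mul]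

lemma hardy_lintegral (p : ℝ) (hp : 1 < p) (g : ℝ → ℝ≥0∞) (hg : Measurable g) :
    ∫⁻ x, (∫⁻ t in Ioo (0:ℝ) 1, g (t * x)) ^ p
      ≤ ENNReal.ofReal (p / (p - 1)) ^ p * ∫⁻ y, (g y) ^ p := by
  set q : ℝ := p / (p - 1) with hq
  have hpq : p.HolderConjugate q := Real.HolderConjugate.conjExponent hp
  have hp0 : (0:ℝ) < p := hpq.pos
  have hq0 : (0:ℝ) < q := hpq.symm.pos
  set s : ℝ := 1 / (p * q) with hs
  have hs0 : 0 < s := by positivity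
  -- the auxiliary inner integral
  set B : ℝ → ℝ≥0∞ := fun x => ∫⁻ t in Ioo (0:ℝ) 1, (ENNReal.ofReal t) ^ (1/q) * g (t * x) ^ p
    with hB
  -- Hölder step
  have hHolder : ∀ x : ℝ, ∫⁻ t in Ioo (0:ℝ) 1, g (t * x)
      ≤ (B x) ^ (1/p) * (ENNReal.ofReal q) ^ (1/q) := by
    intro x
    have h1 : ∫⁻ t in Ioo (0:ℝ) 1, g (t * x)
        = ∫⁻ t in Ioo (0:ℝ) 1,
          (((fun t : ℝ => (ENNReal.ofReal t) ^ s * g (t * x)) *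
            (fun t : ℝ => (ENNReal.ofReal t) ^ (-s))) t) := by
      refine setLIntegral_congr_fun_ae measurableSet_Ioo (ae_of_all _ fun t ht => ?_)
      have h0 : ENNReal.ofReal t ≠ 0 := by
        simp [ENNReal.ofReal_eq_zero, not_le, ht.1]
      simp only [Pi.mul_apply]
      rw [mul_comm ((ENNReal.ofReal t) ^ s), mul_assoc,
        ← ENNReal.rpow_add _ _ h0 ENNReal.ofReal_ne_top]
      simp
    rw [h1]
    have h2 := ENNReal.lintegral_mul_le_Lp_mul_Lq (volume.restrict (Ioo (0:ℝ) 1)) hpq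
      (f := fun t : ℝ => (ENNReal.ofReal t) ^ s * g (t * x))
      (g := fun t : ℝ => (ENNReal.ofReal t) ^ (-s)) (by fun_prop) (by fun_prop)
    refine h2.trans_eq ?_
    congr 1
    · -- first factor equals (B x)^(1/p)
      congr 1
      refine setLIntegral_congr_fun_ae measurableSet_Ioo (ae_of_all _ fun t ht => ?_)
      rw [ENNReal.mul_rpow_of_nonneg _ _ hp0.le, ← ENNReal.rpow_mul]
      congr 2
      rw [hs]
      field_simp
    · -- second factor
      have h3 : ∫⁻ t in Ioo (0:ℝ) 1, ((ENNReal.ofReal t) ^ (-s)) ^ q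
          = ENNReal.ofReal q := by
        have : ∀ t ∈ Ioo (0:ℝ) 1, ((ENNReal.ofReal t) ^ (-s)) ^ q
            = ENNReal.ofReal (t ^ (-(1/p))) := by
          intro t ht
          rw [← ENNReal.rpow_mul, ← ENNReal.ofReal_rpow_of_pos ht.1]
          congr 1
          rw [hs]
          field_simp
        have hplt : 1 / p < 1 := by rw [div_lt_one hp0]; exact hp
        rw [setLIntegral_congr_fun_ae measurableSet_Ioo (ae_of_all _ this),
          L1 (by linarith)]
        congr 1
        rw [hq]
        rw [neg_add_eq_sub, one_div, one_div]
        rw [inv_eq_iff_eq_inv]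
        field_simp
      rw [h3]
  -- raise to power p
  have step2 : ∀ x : ℝ, (∫⁻ t in Ioo (0:ℝ) 1, g (t * x)) ^ p
      ≤ B x * (ENNReal.ofReal q) ^ (p/q) := by
    intro x
    refine (ENNReal.rpow_le_rpow (hHolder x) hp0.le).trans_eq ?_
    rw [ENNReal.mul_rpow_of_nonneg _ _ hp0.le, ← ENNReal.rpow_mul, ← ENNReal.rpow_mul,
      one_div, inv_mul_cancel₀ hp0.ne', ENNReal.rpow_one]
    congr 1
    rw [div_mul_eq_mul_div, one_mul]
  -- integrate and swap
  have hI : ∫⁻ x, B x = ENNReal.ofReal q * ∫⁻ y, g y ^ p := by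
    have hmeas : Measurable (Function.uncurry fun (x t : ℝ) =>
        (ENNReal.ofReal t) ^ (1/q) * g (t * x) ^ p) := by
      apply Measurable.mul
      · exact (ENNReal.measurable_ofReal.comp measurable_snd).pow_const _
      · exact (hg.comp (measurable_snd.mul measurable_fst)).pow_const _
    have hswap := lintegral_lintegral_swap (μ := volume)
      (ν := volume.restrict (Ioo (0:ℝ) 1))
      (f := fun (x t : ℝ) => (ENNReal.ofReal t) ^ (1/q) * g (t * x) ^ p) hmeas.aemeasurable
    rw [hB]
    rw [hswap]
    have hinner : ∀ t ∈ Ioo (0:ℝ) 1,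
        ∫⁻ x, (ENNReal.ofReal t) ^ (1/q) * g (t * x) ^ p
          = ((ENNReal.ofReal t) ^ (1/q) * ENNReal.ofReal t⁻¹) * ∫⁻ y, g y ^ p := by
      intro t ht
      rw [lintegral_const_mul' _ _ (ENNReal.rpow_ne_top_of_nonneg (by positivity)
        ENNReal.ofReal_ne_top), L2 ht.1 (fun y => g y ^ p) (hg.pow_const _), mul_assoc]
    rw [setLIntegral_congr_fun_ae measurableSet_Ioo (ae_of_all _ hinner),
      lintegral_mul_const _ (by fun_prop)]
    congr 1
    have : ∀ t ∈ Ioo (0:ℝ) 1, (ENNReal.ofReal t) ^ (1/q) * ENNReal.ofReal t⁻¹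
        = ENNReal.ofReal (t ^ (1/q - 1)) := by
      intro t ht
      rw [ENNReal.ofReal_inv_of_pos ht.1, ← ENNReal.rpow_neg_one (ENNReal.ofReal t),
        ← ENNReal.rpow_add _ _ (by simp [ENNReal.ofReal_eq_zero, not_le, ht.1])
          ENNReal.ofReal_ne_top, ENNReal.ofReal_rpow_of_pos ht.1]
      norm_num
      rw [← sub_eq_add_neg]
    rw [setLIntegral_congr_fun_ae measurableSet_Ioo (ae_of_all _ this),
      L1 (by have := one_div_pos.mpr hq0; linarith)]
    congr 1
    field_simp
    ring
  calc ∫⁻ x, (∫⁻ t in Ioo (0:ℝ) 1, g (t * x)) ^ p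
      ≤ ∫⁻ x, B x * (ENNReal.ofReal q) ^ (p/q) := lintegral_mono step2
    _ = (ENNReal.ofReal q) ^ (p/q) * ∫⁻ x, B x := by
        simp_rw [mul_comm (B _) _]
        exact lintegral_const_mul' _ _ (ENNReal.rpow_ne_top_of_nonneg
          (by positivity) ENNReal.ofReal_ne_top)
    _ = (ENNReal.ofReal q) ^ (p/q) * (ENNReal.ofReal q * ∫⁻ y, g y ^ p) := by rw [hI]
    _ = ENNReal.ofReal q ^ p * ∫⁻ y, g y ^ p := by
        rw [← mul_assoc]
        congr 1
        have h4 : p / q + 1 = p := by rw [hpq.div_conj_eq_sub_one]; ring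
        calc ENNReal.ofReal q ^ (p/q) * ENNReal.ofReal q
            = ENNReal.ofReal q ^ (p/q) * ENNReal.ofReal q ^ (1:ℝ) := by
              rw [ENNReal.rpow_one]
          _ = ENNReal.ofReal q ^ (p/q + 1) := (ENNReal.rpow_add _ _
              (by simp [ENNReal.ofReal_eq_zero, not_le, hq0]) ENNReal.ofReal_ne_top).symm
          _ = ENNReal.ofReal q ^ p := by rw [h4]

lemma hardy_part1 (p : ℝ) (hp : 1 < p) (f : ℝ → ℂ)
    (hf : MemLp f (ENNReal.ofReal p) volume) :
    eLpNorm (fun x => ∫ t in Ioo (0:ℝ) 1, f (t * x)) (ENNReal.ofReal p) volume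
      ≤ ENNReal.ofReal (p / (p - 1)) * eLpNorm f (ENNReal.ofReal p) volume := by
  have hp0 : (0:ℝ) < p := lt_trans one_pos hp
  have hP0 : ENNReal.ofReal p ≠ 0 := by simp [ENNReal.ofReal_eq_zero, not_le, hp0]
  have hPt : ENNReal.ofReal p ≠ ⊤ := ENNReal.ofReal_ne_top
  have htoReal : (ENNReal.ofReal p).toReal = p := ENNReal.toReal_ofReal hp0.le
  set f' := hf.1.mk f with hf'def
  have hf'm : StronglyMeasurable f' := hf.1.stronglyMeasurable_mk
  have hff' : f =ᵐ[volume] f' := hf.1.ae_eq_mk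
  set g : ℝ → ℝ≥0∞ := fun y => (‖f' y‖₊ : ℝ≥0∞) with hgdef
  have hg : Measurable g := hf'm.measurable.nnnorm.coe_nnreal_ennreal
  -- a.e. scaling equality
  obtain ⟨N, hNsub, hNmeas, hN0⟩ :=
    exists_measurable_superset_of_null (ae_iff.mp hff')
  have key : ∀ x : ℝ, x ≠ 0 → ∀ᵐ t ∂(volume : Measure ℝ), f (t * x) = f' (t * x) := by
    intro x hx
    have hpre : volume ((fun t : ℝ => t * x) ⁻¹' N) = 0 := by
      rw [← Measure.map_apply (measurable_mul_const x) hNmeas,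
        Real.map_volume_mul_right hx, Measure.smul_apply, hN0]
      simp
    refine measure_mono_null (fun t ht => ?_) hpre
    exact hNsub ht
  have hae : ∀ᵐ x ∂(volume : Measure ℝ),
      ∀ᵐ t ∂(volume.restrict (Ioo (0:ℝ) 1)), f (t * x) = f' (t * x) := by
    have h0 : ∀ᵐ (x : ℝ), x ≠ 0 := by
      rw [ae_iff]
      simp only [not_not, setOf_eq_eq_singleton]
      exact measure_singleton 0
    filter_upwards [h0] with x hx
    exact ae_restrict_of_ae (key x hx)
  rw [eLpNorm_eq_lintegral_rpow_nnnorm hP0 hPt, eLpNorm_eq_lintegral_rpow_nnnorm hP0 hPt,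
    htoReal]
  have hbound : ∫⁻ x, ((‖∫ t in Ioo (0:ℝ) 1, f (t * x)‖₊ : ℝ≥0∞)) ^ p
      ≤ ENNReal.ofReal (p / (p - 1)) ^ p * ∫⁻ y, g y ^ p := by
    refine le_trans (lintegral_mono_ae ?_) (hardy_lintegral p hp g hg)
    filter_upwards [hae] with x hx
    refine ENNReal.rpow_le_rpow ?_ hp0.le
    refine le_trans (enorm_integral_le_lintegral_enorm _) ?_
    refine le_of_eq (lintegral_congr_ae ?_)
    filter_upwards [hx] with t ht
    rw [ht]
    rfl
  have hrhs : ∫⁻ y, ((‖f y‖₊ : ℝ≥0∞)) ^ p = ∫⁻ y, g y ^ p := by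
    refine lintegral_congr_ae ?_
    filter_upwards [hff'] with y hy
    rw [hy]
  rw [hrhs]
  calc (∫⁻ x, ((‖∫ t in Ioo (0:ℝ) 1, f (t * x)‖₊ : ℝ≥0∞)) ^ p) ^ (1/p)
      ≤ (ENNReal.ofReal (p / (p - 1)) ^ p * ∫⁻ y, g y ^ p) ^ (1/p) :=
        ENNReal.rpow_le_rpow hbound (by positivity)
    _ = ENNReal.ofReal (p / (p - 1)) * (∫⁻ y, g y ^ p) ^ (1/p) := by
        rw [ENNReal.mul_rpow_of_nonneg _ _ (by positivity), ← ENNReal.rpow_mul,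
          mul_one_div, div_self hp0.ne', ENNReal.rpow_one]

section Sharp
variable (p : ℝ)

noncomputable def testF (a : ℝ) : ℝ → ℂ :=
  fun x => (((Ioo (0:ℝ) 1).indicator (fun y : ℝ => y ^ a) x : ℝ) : ℂ)

lemma testF_meas (a : ℝ) : Measurable (testF a) := by
  have h1 : Measurable fun y : ℝ => y ^ a := by fun_prop
  exact Complex.measurable_ofReal.comp (h1.indicator measurableSet_Ioo)

lemma E_comp (hp : 1 < p) {b : ℝ} (hb : -1 < b * p) :
    ∫⁻ x, ((‖testF b x‖₊ : ℝ≥0∞)) ^ p = ENNReal.ofReal (1/(b*p+1)) := by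
  have hp0 : (0:ℝ) < p := lt_trans one_pos hp
  have hpt : ∀ x : ℝ, ((‖testF b x‖₊ : ℝ≥0∞)) ^ p
      = (Ioo (0:ℝ) 1).indicator (fun x => ENNReal.ofReal (x ^ (b*p))) x := by
    intro x
    by_cases hx : x ∈ Ioo (0:ℝ) 1
    · rw [indicator_of_mem hx, testF, indicator_of_mem hx, ← ofReal_norm_eq_coe_nnnorm,
        Complex.norm_real, Real.norm_eq_abs, abs_of_nonneg (Real.rpow_nonneg hx.1.le _),
        ENNReal.ofReal_rpow_of_pos (Real.rpow_pos_of_pos hx.1 _), ← Real.rpow_mul hx.1.le]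
    · rw [indicator_of_notMem hx, testF, indicator_of_notMem hx]
      simp [ENNReal.zero_rpow_of_pos hp0]
  simp_rw [hpt]
  rw [lintegral_indicator measurableSet_Ioo, L1 hb]

lemma testF_mem (hp : 1 < p) {b : ℝ} (hb : -1 < b * p) :
    MemLp (testF b) (ENNReal.ofReal p) volume := by
  have hp0 : (0:ℝ) < p := lt_trans one_pos hp
  have hP0 : ENNReal.ofReal p ≠ 0 := by simp [ENNReal.ofReal_eq_zero, not_le, hp0]
  refine ⟨(testF_meas b).aestronglyMeasurable, ?_⟩
  rw [eLpNorm_eq_lintegral_rpow_nnnorm hP0 ENNReal.ofReal_ne_top,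
    ENNReal.toReal_ofReal hp0.le, E_comp p hp hb]
  exact ENNReal.rpow_lt_top_of_nonneg (by positivity) ENNReal.ofReal_ne_top

lemma testF_eLpNorm (hp : 1 < p) {b : ℝ} (hb : -1 < b * p) :
    eLpNorm (testF b) (ENNReal.ofReal p) volume
      = ENNReal.ofReal (1/(b*p+1)) ^ (1/p) := by
  have hp0 : (0:ℝ) < p := lt_trans one_pos hp
  have hP0 : ENNReal.ofReal p ≠ 0 := by simp [ENNReal.ofReal_eq_zero, not_le, hp0]
  rw [eLpNorm_eq_lintegral_rpow_nnnorm hP0 ENNReal.ofReal_ne_top,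
    ENNReal.toReal_ofReal hp0.le, E_comp p hp hb]

lemma testH {a : ℝ} (ha : -1 < a) {x : ℝ} (hx : x ∈ Ioo (0:ℝ) 1) :
    ∫ t in Ioo (0:ℝ) 1, testF a (t * x) = ((x ^ a / (a+1) : ℝ) : ℂ) := by
  have hcong : EqOn (fun t => testF a (t * x)) (fun t => (((t*x) ^ a : ℝ) : ℂ))
      (Ioo (0:ℝ) 1) := by
    intro t ht
    have hmem : t * x ∈ Ioo (0:ℝ) 1 := by
      constructor
      · exact mul_pos ht.1 hx.1
      · calc t * x < 1 * x := by nlinarith [ht.2, hx.1]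
          _ = x := one_mul x
          _ < 1 := hx.2
    simp only [testF, indicator_of_mem hmem]
  rw [setIntegral_congr_fun measurableSet_Ioo hcong]
  rw [show (fun t : ℝ => (((t*x) ^ a : ℝ) : ℂ)) = fun t : ℝ => (RCLike.ofReal ((t*x) ^ a) : ℂ)
    from rfl, integral_ofReal]
  norm_cast
  have hc2 : EqOn (fun t : ℝ => (t*x) ^ a) (fun t : ℝ => x ^ a * t ^ a) (Ioo (0:ℝ) 1) := by
    intro t ht
    simp only
    rw [mul_comm t x, Real.mul_rpow hx.1.le ht.1.le]
  rw [setIntegral_congr_fun measurableSet_Ioo hc2, integral_const_mul]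
  have h1 : ∫ t in Ioo (0:ℝ) 1, t ^ a = 1/(a+1) := by
    rw [restrict_Ioo_eq_restrict_Ioc, ← intervalIntegral.integral_of_le zero_le_one,
      integral_rpow (Or.inl ha), Real.one_rpow, Real.zero_rpow (by linarith)]
    norm_num
  rw [h1]
  push_cast
  ring_nf
  rfl

lemma E_Ioo (hp : 1 < p) {a : ℝ} (hb : -1 < a * p) :
    ∫⁻ x in Ioo (0:ℝ) 1, ENNReal.ofReal (x ^ a) ^ p = ENNReal.ofReal (1/(a*p+1)) := by
  have : ∀ x ∈ Ioo (0:ℝ) 1, ENNReal.ofReal (x ^ a) ^ p = ENNReal.ofReal (x ^ (a*p)) := by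
    intro x hx
    rw [ENNReal.ofReal_rpow_of_pos (Real.rpow_pos_of_pos hx.1 _), ← Real.rpow_mul hx.1.le]
  rw [setLIntegral_congr_fun_ae measurableSet_Ioo (ae_of_all _ this), L1 hb]

lemma testH_lower (hp : 1 < p) {a : ℝ} (ha : -1 < a) (ha1 : 0 < a + 1)
    (hb : -1 < a * p) :
    ENNReal.ofReal (1/(a+1)) * ENNReal.ofReal (1/(a*p+1)) ^ (1/p)
      ≤ eLpNorm (fun x => ∫ t in Ioo (0:ℝ) 1, testF a (t * x)) (ENNReal.ofReal p) volume := by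
  have hp0 : (0:ℝ) < p := lt_trans one_pos hp
  have hP0 : ENNReal.ofReal p ≠ 0 := by simp [ENNReal.ofReal_eq_zero, not_le, hp0]
  rw [eLpNorm_eq_lintegral_rpow_nnnorm hP0 ENNReal.ofReal_ne_top, ENNReal.toReal_ofReal hp0.le]
  have hlow : ENNReal.ofReal (1/(a+1)) ^ p * ENNReal.ofReal (1/(a*p+1))
      ≤ ∫⁻ x, ((‖∫ t in Ioo (0:ℝ) 1, testF a (t * x)‖₊ : ℝ≥0∞)) ^ p := by
    refine le_trans ?_ (setLIntegral_le_lintegral (Ioo (0:ℝ) 1) _)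
    have hcong : ∀ x ∈ Ioo (0:ℝ) 1,
        ((‖∫ t in Ioo (0:ℝ) 1, testF a (t * x)‖₊ : ℝ≥0∞)) ^ p
          = ENNReal.ofReal (1/(a+1)) ^ p * ENNReal.ofReal (x ^ a) ^ p := by
      intro x hx
      rw [testH ha hx, ← ofReal_norm_eq_coe_nnnorm, Complex.norm_real, Real.norm_eq_abs,
        abs_of_nonneg (div_nonneg (Real.rpow_nonneg hx.1.le _) ha1.le),
        ← ENNReal.mul_rpow_of_nonneg _ _ hp0.le,
        ← ENNReal.ofReal_mul (by positivity)]
      congr 2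
      ring
    rw [setLIntegral_congr_fun_ae measurableSet_Ioo (ae_of_all _ hcong),
      lintegral_const_mul' _ _ (ENNReal.rpow_ne_top_of_nonneg hp0.le ENNReal.ofReal_ne_top),
      E_Ioo p hp hb]
  calc ENNReal.ofReal (1/(a+1)) * ENNReal.ofReal (1/(a*p+1)) ^ (1/p)
      = (ENNReal.ofReal (1/(a+1)) ^ p * ENNReal.ofReal (1/(a*p+1))) ^ (1/p) := by
        rw [ENNReal.mul_rpow_of_nonneg _ _ (by positivity), ← ENNReal.rpow_mul,
          mul_one_div, div_self hp0.ne', ENNReal.rpow_one]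
    _ ≤ _ := ENNReal.rpow_le_rpow hlow (by positivity)

end Sharp

/-- The classical Hardy inequality on `ℝ`: `‖Hf‖_{L^p} ≤ (p/(p-1))‖f‖_{L^p}` where
`Hf(x) = ∫₀¹ f(tx) dt`, and the constant `p/(p-1)` is best possible. -/
theorem classical_hardy_sharp (p : ℝ) (hp : 1 < p) :
    (∀ f : ℝ → ℂ, MemLp f (ENNReal.ofReal p) volume →
      eLpNorm (fun x => ∫ t in Ioo (0:ℝ) 1, f (t * x)) (ENNReal.ofReal p) volume
        ≤ ENNReal.ofReal (p / (p - 1)) * eLpNorm f (ENNReal.ofReal p) volume) ∧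
    (∀ c : ℝ, (∀ f : ℝ → ℂ, MemLp f (ENNReal.ofReal p) volume →
      eLpNorm (fun x => ∫ t in Ioo (0:ℝ) 1, f (t * x)) (ENNReal.ofReal p) volume
        ≤ ENNReal.ofReal c * eLpNorm f (ENNReal.ofReal p) volume) → p / (p - 1) ≤ c) := by
  have hp0 : (0:ℝ) < p := lt_trans one_pos hp
  constructor
  · exact fun f hf => hardy_part1 p hp f hf
  · intro c hc
    have hstep : ∀ ε : ℝ, 0 < ε → 1/(ε - 1/p + 1) ≤ c := by
      intro ε hε
      set a : ℝ := ε - 1/p with hadef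
      have hpinv : 1/p < 1 := by rw [div_lt_one hp0]; exact hp
      have ha : -1 < a := by simp only [hadef]; linarith
      have ha1 : 0 < a + 1 := by linarith
      have hb : -1 < a * p := by
        have : a * p = ε * p - 1 := by rw [hadef]; field_simp
        rw [this]
        nlinarith
      have h1 := hc (testF a) (testF_mem p hp hb)
      rw [testF_eLpNorm p hp hb] at h1
      have h2 := (testH_lower p hp ha ha1 hb).trans h1
      set D : ℝ≥0∞ := ENNReal.ofReal (1/(a*p+1)) ^ (1/p) with hD
      have hap : (0:ℝ) < a*p+1 := by linarith
      have hD0 : D ≠ 0 := by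
        rw [hD]
        refine (ENNReal.rpow_pos ?_ ENNReal.ofReal_ne_top).ne'
        rw [ENNReal.ofReal_pos]
        positivity
      have hDt : D ≠ ⊤ := ENNReal.rpow_ne_top_of_nonneg (by positivity) ENNReal.ofReal_ne_top
      have h3 : ENNReal.ofReal (1/(a+1)) ≤ ENNReal.ofReal c :=
        (ENNReal.mul_le_mul_iff_left hD0 hDt).mp h2
      have hpos : (0:ℝ) < 1/(a+1) := by positivity
      have hcpos : 0 < c :=
        ENNReal.ofReal_pos.mp (lt_of_lt_of_le (ENNReal.ofReal_pos.mpr hpos) h3)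
      exact (ENNReal.ofReal_le_ofReal_iff hcpos.le).mp h3
    -- take the limit ε → 0
    set r : ℝ := 1 - 1/p with hr
    have hr0 : 0 < r := by
      have : 1/p < 1 := by rw [div_lt_one hp0]; exact hp
      simp only [hr]; linarith
    have hq : p / (p - 1) = 1 / r := by
      rw [hr]
      field_simp
    rw [hq]
    by_contra hlt
    push_neg at hlt
    have hc0 : 0 < c := by
      have h1 := hstep 1 one_pos
      have : (0:ℝ) < 1/(1 - 1/p + 1) := by positivity
      linarith
    have hcr : c * r < 1 := by
      rw [div_eq_mul_inv, one_mul] at hlt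
      calc c * r < r⁻¹ * r := by
            exact mul_lt_mul_of_pos_right hlt hr0
        _ = 1 := inv_mul_cancel₀ hr0.ne'
    set ε : ℝ := (1/c - r)/2 with hεdef
    have hrc : r < 1/c := by
      rw [lt_div_iff₀ hc0]
      linarith [mul_comm c r]
    have hε : 0 < ε := by simp only [hεdef]; linarith
    have hkey := hstep ε hε
    have hsum : ε - 1/p + 1 = (1/c + r)/2 := by
      simp only [hεdef, hr]
      ring
    rw [hsum] at hkey
    have hhalf : (0:ℝ) < (1/c + r)/2 := by positivity
    rw [div_le_iff₀ hhalf] at hkey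
    nlinarith [mul_one_div_cancel hc0.ne']
end

section
/- Let m ∈ ℕ, 1 < p, p₁, …, p_m < ∞ with 1/p = 1/p₁ + ⋯ + 1/p_m, and let ω : [0,1]^m → [0,∞) be integrable with A_m := ∫_{[0,1]^m} (∏ᵢ tᵢ^{-n/pᵢ}) ω(t₁,…,t_m) dt < ∞. Then for all fᵢ ∈ L^{pᵢ}(ℝⁿ), ‖H_ω^m(f₁,…,f_m)‖_{L^p(ℝⁿ)} ≤ A_m ∏ᵢ ‖fᵢ‖_{L^{pᵢ}(ℝⁿ)}. -/
open MeasureTheory Set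

open scoped ENNReal

theorem ennreal_iSup_rpow {ι : Sort*} (h : ι → ℝ≥0∞) {r : ℝ} (hr : 0 < r) :
    (⨆ i, h i) ^ r = ⨆ i, h i ^ r := by
  have := (ENNReal.orderIsoRpow r hr).map_iSup h
  exact this

theorem lintegral_minkowski {α β : Type*} [MeasurableSpace α] [MeasurableSpace β]
    (μ : Measure α) (ν : Measure β) [SigmaFinite μ] [SigmaFinite ν]
    {p q : ℝ} (hpq : p.HolderConjugate q) {F : β → α → ℝ≥0∞}
    (hF : AEMeasurable (fun z : β × α => F z.1 z.2) (ν.prod μ)) :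
    (∫⁻ x, (∫⁻ t, F t x ∂ν) ^ p ∂μ) ^ (1/p) ≤ ∫⁻ t, (∫⁻ x, (F t x) ^ p ∂μ) ^ (1/p) ∂ν := by
  have hp1 : 1 < p := hpq.lt
  have hp0 : 0 < p := by linarith
  have hq0 : 0 < q := hpq.symm.pos
  set f : α → ℝ≥0∞ := fun x => ∫⁻ t, F t x ∂ν with hfdef
  set R := ∫⁻ t, (∫⁻ x, (F t x) ^ p ∂μ) ^ (1/p) ∂ν with hRdef
  set G : β × α → ℝ≥0∞ := hF.mk _ with hGdef
  have hG : Measurable G := hF.measurable_mk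
  have hFG : (fun z : β × α => F z.1 z.2) =ᵐ[ν.prod μ] G := hF.ae_eq_mk
  -- slices
  have hslice : ∀ᵐ t ∂ν, (F t) =ᵐ[μ] fun x => G (t, x) := Measure.ae_ae_of_ae_prod hFG
  -- f is a.e. equal to a measurable function
  have hGm : Measurable fun x => ∫⁻ t, G (t, x) ∂ν := hG.lintegral_prod_left'
  have hswapFG : (fun z : α × β => F z.2 z.1) =ᵐ[μ.prod ν] fun z => G (z.2, z.1) :=
    (Measure.measurePreserving_swap).quasiMeasurePreserving.ae hFG
  have hff' : f =ᵐ[μ] fun x => ∫⁻ t, G (t, x) ∂ν := by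
    filter_upwards [Measure.ae_ae_of_ae_prod hswapFG] with x hx
    exact lintegral_congr_ae hx
  set f' : α → ℝ≥0∞ := fun x => ∫⁻ t, G (t, x) ∂ν with hf'def
  -- key step for truncations
  have key : ∀ g : α → ℝ≥0∞, Measurable g → (g ≤ᵐ[μ] f) → (∀ x, g x ≠ ∞) →
      (∫⁻ x, g x ^ p ∂μ) ≠ ∞ → (∫⁻ x, g x ^ p ∂μ) ^ (1/p) ≤ R := by
    intro g hgm hgf hgt hJ
    set J := ∫⁻ x, g x ^ p ∂μ with hJdef
    rcases eq_or_ne J 0 with h0 | h0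
    · rw [h0, ENNReal.zero_rpow_of_pos (by positivity)]; exact zero_le
    have hgp1 : ∀ x, g x ^ (p - 1) ≠ ∞ :=
      fun x => ENNReal.rpow_ne_top_of_nonneg (by linarith) (hgt x)
    have step1 : J ≤ ∫⁻ t, ∫⁻ x, g x ^ (p-1) * F t x ∂μ ∂ν := by
      calc J ≤ ∫⁻ x, g x ^ (p-1) * f x ∂μ := by
            refine lintegral_mono_ae (hgf.mono fun x hx => ?_)
            calc g x ^ p = g x ^ (p-1) * g x ^ (1:ℝ) := by
                  rw [← ENNReal.rpow_add_of_nonneg _ _ (by linarith) zero_le_one]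
                  norm_num
              _ ≤ g x ^ (p-1) * f x := by
                  rw [ENNReal.rpow_one]; exact mul_le_mul_right hx _
        _ = ∫⁻ x, ∫⁻ t, g x ^ (p-1) * F t x ∂ν ∂μ := by
            refine lintegral_congr fun x => ?_
            rw [lintegral_const_mul' _ _ (hgp1 x)]
        _ = ∫⁻ t, ∫⁻ x, g x ^ (p-1) * F t x ∂μ ∂ν := by
            refine lintegral_lintegral_swap ?_
            exact (((hgm.comp measurable_fst).pow_const _).aemeasurable).mul hF.prod_swap
    have hconj : (p - 1) * q = p := by
      have h := hpq.sub_one_mul_conj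
      linarith
    have step2 : J ≤ J ^ (1/q) * R := by
      refine step1.trans ?_
      have hholder : ∀ᵐ t ∂ν,
          ∫⁻ x, g x ^ (p-1) * F t x ∂μ ≤ J ^ (1/q) * (∫⁻ x, F t x ^ p ∂μ) ^ (1/p) := by
        filter_upwards [hslice] with t ht
        have hFt : AEMeasurable (F t) μ :=
          ((hG.comp measurable_prodMk_left).aemeasurable).congr ht.symm
        have h := ENNReal.lintegral_mul_le_Lp_mul_Lq μ hpq.symm
          ((hgm.pow_const (p-1)).aemeasurable) hFt
        simp only [Pi.mul_apply] at h
        calc ∫⁻ x, g x ^ (p-1) * F t x ∂μ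
            ≤ (∫⁻ x, (g x ^ (p-1)) ^ q ∂μ) ^ (1/q) * (∫⁻ x, F t x ^ p ∂μ) ^ (1/p) := h
          _ = J ^ (1/q) * (∫⁻ x, F t x ^ p ∂μ) ^ (1/p) := by
              congr 2
              refine lintegral_congr fun x => ?_
              rw [← ENNReal.rpow_mul, hconj]
      calc ∫⁻ t, ∫⁻ x, g x ^ (p-1) * F t x ∂μ ∂ν
          ≤ ∫⁻ t, J ^ (1/q) * (∫⁻ x, F t x ^ p ∂μ) ^ (1/p) ∂ν := lintegral_mono_ae hholder
        _ = J ^ (1/q) * R := lintegral_const_mul' _ _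
            (ENNReal.rpow_ne_top_of_nonneg (by positivity) hJ)
    have hJq0 : J ^ (1/q) ≠ 0 := by
      simp only [ne_eq, ENNReal.rpow_eq_zero_iff, not_or]
      constructor
      · rintro ⟨h, -⟩; exact h0 h
      · rintro ⟨h, -⟩; exact hJ h
    have hJqt : J ^ (1/q) ≠ ∞ := ENNReal.rpow_ne_top_of_nonneg (by positivity) hJ
    have hmul : J ^ (1/p) * J ^ (1/q) ≤ R * J ^ (1/q) := by
      calc J ^ (1/p) * J ^ (1/q) = J ^ (1/p + 1/q) :=
            (ENNReal.rpow_add_of_nonneg _ _ (by positivity) (by positivity)).symm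
        _ = J := by rw [one_div, one_div, hpq.inv_add_inv_eq_one]; exact ENNReal.rpow_one J
        _ ≤ J ^ (1/q) * R := step2
        _ = R * J ^ (1/q) := mul_comm _ _
    exact (ENNReal.mul_le_mul_iff_left hJq0 hJqt).1 hmul
  -- truncations
  set g : ℕ → α → ℝ≥0∞ :=
    fun N x => (spanningSets μ N).indicator (fun _ => min (f' x) N) x with hgdef
  have hgm : ∀ N, Measurable (g N) :=
    fun N => (hGm.min measurable_const).indicator (measurableSet_spanningSets μ N)
  have hgle : ∀ N x, g N x ≤ f' x := by
    intro N x
    refine (Set.indicator_le_self _ _ x).trans ?_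
    exact min_le_left _ _
  have hgtop : ∀ N x, g N x ≠ ∞ := by
    intro N x
    refine ne_top_of_le_ne_top (a := g N x) (b := (N : ℝ≥0∞)) (by simp) ?_
    classical
    by_cases hx : x ∈ spanningSets μ N
    · simp only [hgdef, Set.indicator_of_mem hx]
      exact min_le_right _ _
    · simp [hgdef, Set.indicator_of_notMem hx]
  have hgmono : Monotone g := by
    intro N M hNM x
    classical
    by_cases hx : x ∈ spanningSets μ N
    · have hx' : x ∈ spanningSets μ M := monotone_spanningSets μ hNM hx
      simp only [hgdef, Set.indicator_of_mem hx, Set.indicator_of_mem hx']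
      exact min_le_min le_rfl (by exact_mod_cast Nat.cast_le.2 hNM)
    · simp [hgdef, Set.indicator_of_notMem hx]
  have hgsup : ∀ x, ⨆ N, g N x = f' x := by
    intro x
    refine le_antisymm (iSup_le fun N => hgle N x) ?_
    obtain ⟨N₀, hN₀⟩ : ∃ N₀, x ∈ spanningSets μ N₀ := by
      have : x ∈ ⋃ N, spanningSets μ N := by rw [iUnion_spanningSets]; trivial
      exact Set.mem_iUnion.1 this
    have h1 : ∀ N : ℕ, min (f' x) N ≤ ⨆ M, g M x := by
      intro N
      refine le_iSup_of_le (max N N₀) ?_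
      have hx' : x ∈ spanningSets μ (max N N₀) :=
        monotone_spanningSets μ (le_max_right _ _) hN₀
      simp only [hgdef, Set.indicator_of_mem hx']
      exact min_le_min le_rfl (by exact_mod_cast Nat.cast_le.2 (le_max_left _ _))
    calc f' x = min (f' x) (⨆ N : ℕ, (N : ℝ≥0∞)) := by
          rw [ENNReal.iSup_natCast, min_eq_left le_top]
      _ = ⨆ N : ℕ, min (f' x) (N : ℝ≥0∞) := by
          exact inf_iSup_eq _ _
      _ ≤ ⨆ M, g M x := iSup_le h1
  -- monotone convergence
  have hJmono : (∫⁻ x, f x ^ p ∂μ) = ⨆ N, ∫⁻ x, g N x ^ p ∂μ := by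
    have h1 : (∫⁻ x, f x ^ p ∂μ) = ∫⁻ x, f' x ^ p ∂μ :=
      lintegral_congr_ae (hff'.mono fun x hx => by simp only [hx])
    rw [h1, ← lintegral_iSup (fun N => (hgm N).pow_const p)
      (fun N M hNM x => ENNReal.rpow_le_rpow (hgmono hNM x) hp0.le)]
    refine lintegral_congr fun x => ?_
    rw [← hgsup x]
    exact ennreal_iSup_rpow (fun N => g N x) hp0
  have hJN : ∀ N, (∫⁻ x, g N x ^ p ∂μ) ≠ ∞ := by
    intro N
    have hb : ∀ x, g N x ^ p ≤ (spanningSets μ N).indicator (fun _ => (N : ℝ≥0∞) ^ p) x := by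
      intro x
      classical
      by_cases hx : x ∈ spanningSets μ N
      · simp only [hgdef, Set.indicator_of_mem hx]
        exact ENNReal.rpow_le_rpow (min_le_right _ _) hp0.le
      · simp [hgdef, Set.indicator_of_notMem hx, ENNReal.zero_rpow_of_pos hp0]
    refine ne_top_of_le_ne_top ?_ (lintegral_mono hb)
    rw [lintegral_indicator (measurableSet_spanningSets μ N)]
    simp only [MeasureTheory.setLIntegral_const]
    exact ENNReal.mul_ne_top (ENNReal.rpow_ne_top_of_nonneg hp0.le (by simp))
      (measure_spanningSets_lt_top μ N).ne
  rw [hJmono]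
  rw [ennreal_iSup_rpow _ (by positivity : (0:ℝ) < 1/p)]
  refine iSup_le fun N => ?_
  refine key (g N) (hgm N) ?_ (hgtop N) (hJN N)
  filter_upwards [hff'] with x hx
  rw [hx]; exact hgle N x

/-- Sufficiency in Theorem 2.1: the weighted multilinear Hardy operator is bounded from
`L^{p₁} × ⋯ × L^{p_m}` to `L^p` with norm at most
`A_m = ∫_{(0,1)^m} (∏ᵢ tᵢ^{-n/pᵢ}) ω(t) dt`. -/
theorem weighted_multilinear_hardy_Lp_bound (m n : ℕ) (p : ℝ) (ps : Fin m → ℝ)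
    (hp : 1 < p) (hps : ∀ i, 1 < ps i) (hsum : 1/p = ∑ i, 1/ps i)
    (ω : (Fin m → ℝ) → ℝ)
    (hωnn : ∀ t, 0 ≤ ω t)
    (hωint : IntegrableOn ω (Set.univ.pi fun _ => Icc (0:ℝ) 1))
    (hA : IntegrableOn (fun t => (∏ i, t i ^ (-(n:ℝ)/ps i)) * ω t)
      (Set.univ.pi fun _ => Ioo (0:ℝ) 1))
    (f : Fin m → EuclideanSpace ℝ (Fin n) → ℂ)
    (hf : ∀ i, MemLp (f i) (ENNReal.ofReal (ps i)) volume) :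
    eLpNorm (fun x => ∫ t in (Set.univ.pi fun _ => Ioo (0:ℝ) 1),
        ω t • ∏ i, f i (t i • x)) (ENNReal.ofReal p) volume
      ≤ ENNReal.ofReal (∫ t in (Set.univ.pi fun _ => Ioo (0:ℝ) 1),
            (∏ i, t i ^ (-(n:ℝ)/ps i)) * ω t) *
        ∏ i, eLpNorm (f i) (ENNReal.ofReal (ps i)) volume := by
  have hp0 : 0 < p := by linarith
  have hps0 : ∀ i, 0 < ps i := fun i => by linarith [hps i]
  set S : Set (Fin m → ℝ) := Set.univ.pi fun _ => Ioo (0:ℝ) 1 with hSdef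
  have hSmeas : MeasurableSet S := MeasurableSet.univ_pi fun _ => measurableSet_Ioo
  set ν : Measure (Fin m → ℝ) := volume.restrict S with hνdef
  set μ : Measure (EuclideanSpace ℝ (Fin n)) := volume with hμdef
  have hmemS : ∀ᵐ t ∂ν, t ∈ S := ae_restrict_mem hSmeas
  have hmemS' : ∀ᵐ t ∂ν, ∀ i, t i ∈ Ioo (0:ℝ) 1 := by
    filter_upwards [hmemS] with t ht
    exact fun i => ht i (Set.mem_univ i)
  -- measurable versions of f i
  set g : Fin m → EuclideanSpace ℝ (Fin n) → ℂ :=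
    fun i => ((hf i).1).mk (f i) with hgdef
  have hgsm : ∀ i, StronglyMeasurable (g i) := fun i => ((hf i).1).stronglyMeasurable_mk
  have hfg : ∀ i, f i =ᵐ[μ] g i := fun i => ((hf i).1).ae_eq_mk
  -- the scaling maps
  have hφ : ∀ i : Fin m, Measurable
      (fun z : (Fin m → ℝ) × EuclideanSpace ℝ (Fin n) => z.1 i • z.2) := by
    intro i
    exact (Continuous.smul ((continuous_apply i).comp continuous_fst) continuous_snd).measurable
  -- joint a.e. equality
  have hnull : ∀ i, ∀ᵐ z : (Fin m → ℝ) × EuclideanSpace ℝ (Fin n) ∂ν.prod μ,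
      f i (z.1 i • z.2) = g i (z.1 i • z.2) := by
    intro i
    have hN : μ {y | f i y ≠ g i y} = 0 := (hfg i)
    obtain ⟨D, hsub, hDm, hD0⟩ := exists_measurable_superset_of_null hN
    have hT0 : (ν.prod μ) {z | z.1 i • z.2 ∈ D} = 0 := by
      have hTm : MeasurableSet {z : (Fin m → ℝ) × EuclideanSpace ℝ (Fin n) | z.1 i • z.2 ∈ D} :=
        (hφ i) hDm
      rw [Measure.measure_prod_null hTm]
      filter_upwards [hmemS'] with t ht
      have hti : t i ≠ 0 := ne_of_gt (ht i).1
      have hpre : (Prod.mk t ⁻¹' {z : (Fin m → ℝ) × EuclideanSpace ℝ (Fin n) | z.1 i • z.2 ∈ D})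
          = (t i • · : EuclideanSpace ℝ (Fin n) → _) ⁻¹' D := rfl
      show μ _ = 0
      rw [hpre, ← Measure.map_apply (measurable_const_smul (t i)) hDm,
        Measure.map_addHaar_smul μ hti]
      simp [hD0]
    refine measure_mono_null ?_ hT0
    intro z hz
    exact hsub (by exact hz)
  have hslices : ∀ᵐ t ∂ν, ∀ i, (fun x => f i (t i • x)) =ᵐ[μ] fun x => g i (t i • x) := by
    rw [ae_all_iff]
    exact fun i => Measure.ae_ae_of_ae_prod (hnull i)
  -- ω measurability
  have hωmeas : AEMeasurable ω ν := by
    have hsub : S ⊆ Set.univ.pi fun _ => Icc (0:ℝ) 1 :=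
      Set.pi_mono fun i _ => Ioo_subset_Icc_self
    exact (hωint.mono_set hsub).aemeasurable
  -- the kernel
  set F : (Fin m → ℝ) → EuclideanSpace ℝ (Fin n) → ℝ≥0∞ :=
    fun t x => ENNReal.ofReal (ω t) * ∏ i, (‖f i (t i • x)‖₊ : ℝ≥0∞) with hFdef
  have hFmeas : AEMeasurable (fun z : (Fin m → ℝ) × EuclideanSpace ℝ (Fin n) =>
      F z.1 z.2) (ν.prod μ) := by
    refine AEMeasurable.mul ?_ ?_
    · exact ENNReal.measurable_ofReal.comp_aemeasurable hωmeas.comp_fst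
    · refine Finset.aemeasurable_fun_prod _ fun i _ => ?_
      have hm : Measurable fun z : (Fin m → ℝ) × EuclideanSpace ℝ (Fin n) =>
          (‖g i (z.1 i • z.2)‖₊ : ℝ≥0∞) := ((hgsm i).measurable.comp (hφ i)).enorm
      exact hm.aemeasurable.congr ((hnull i).mono fun z hz => by simp only [hz])
  -- conjugate exponent
  have hpq : p.HolderConjugate (p/(p-1)) := Real.HolderConjugate.conjExponent hp
  -- step 1 : pointwise bound
  have step1 : ∀ x, (‖∫ t in S, ω t • ∏ i, f i (t i • x)‖₊ : ℝ≥0∞) ≤ ∫⁻ t, F t x ∂ν := by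
    intro x
    refine (enorm_integral_le_lintegral_enorm _).trans_eq ?_
    refine lintegral_congr fun t => ?_
    rw [enorm_eq_nnnorm, nnnorm_smul, ENNReal.coe_mul, ← enorm_eq_nnnorm (ω t), Real.enorm_eq_ofReal (hωnn t), nnnorm_prod,
      ENNReal.coe_finset_prod]
  -- step 3 : a.e. per-t bound.
  set C : ℝ≥0∞ := ∏ i, eLpNorm (f i) (ENNReal.ofReal (ps i)) volume with hCdef
  have hCne : C ≠ ∞ := by
    refine (ENNReal.prod_lt_top fun i _ => ?_).ne
    exact (hf i).2
  have hp_sum : ∑ i, p / ps i = 1 := by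
    have : ∑ i, p / ps i = p * ∑ i, 1 / ps i := by
      rw [Finset.mul_sum]
      exact Finset.sum_congr rfl fun i _ => by field_simp
    rw [this, ← hsum]
    field_simp
  have step3 : ∀ᵐ t ∂ν, (∫⁻ x, F t x ^ p ∂μ) ^ (1/p)
      ≤ ENNReal.ofReal ((∏ i, t i ^ (-(n:ℝ)/ps i)) * ω t) * C := by
    filter_upwards [hmemS', hslices] with t ht hts
    have hti0 : ∀ i, (0:ℝ) < t i := fun i => (ht i).1
    -- scaling identity
    have hscale : ∀ i, ∫⁻ x, (‖f i (t i • x)‖₊ : ℝ≥0∞) ^ (ps i) ∂μ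
        = ENNReal.ofReal ((t i ^ n)⁻¹) * ∫⁻ y, (‖f i y‖₊ : ℝ≥0∞) ^ (ps i) ∂μ := by
      intro i
      have h1 : ∫⁻ x, (‖f i (t i • x)‖₊ : ℝ≥0∞) ^ (ps i) ∂μ
          = ∫⁻ x, (‖g i (t i • x)‖₊ : ℝ≥0∞) ^ (ps i) ∂μ :=
        lintegral_congr_ae ((hts i).mono fun x hx => by simp only [hx])
      have h2 : ∫⁻ y, (‖f i y‖₊ : ℝ≥0∞) ^ (ps i) ∂μ
          = ∫⁻ y, (‖g i y‖₊ : ℝ≥0∞) ^ (ps i) ∂μ :=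
        lintegral_congr_ae ((hfg i).mono fun x hx => by simp only [hx])
      rw [h1, h2]
      have hmeas : Measurable fun y : EuclideanSpace ℝ (Fin n) =>
          (‖g i y‖₊ : ℝ≥0∞) ^ (ps i) := ((hgsm i).measurable.enorm).pow_const _
      have hmap : ∫⁻ x, (‖g i (t i • x)‖₊ : ℝ≥0∞) ^ (ps i) ∂μ
          = ∫⁻ y, (‖g i y‖₊ : ℝ≥0∞) ^ (ps i) ∂(Measure.map (t i • ·) μ) :=
        (lintegral_map hmeas (measurable_const_smul (t i))).symm
      rw [hmap, Measure.map_addHaar_smul μ (ne_of_gt (hti0 i)), finrank_euclideanSpace_fin,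
        lintegral_smul_measure, abs_of_nonneg (inv_nonneg.2 (pow_nonneg (hti0 i).le n)), smul_eq_mul]
    -- Hölder
    have hHmeas : ∀ i ∈ Finset.univ, AEMeasurable
        (fun x => (‖f i (t i • x)‖₊ : ℝ≥0∞) ^ (ps i)) μ := by
      intro i _
      have hm : Measurable fun x => (‖g i (t i • x)‖₊ : ℝ≥0∞) ^ (ps i) :=
        ((hgsm i).measurable.comp (measurable_const_smul (t i))).enorm.pow_const _
      exact hm.aemeasurable.congr ((hts i).mono fun x hx => by simp only [hx])
    have hHolder := ENNReal.lintegral_prod_norm_pow_le (μ := μ) Finset.univ hHmeas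
      hp_sum (fun i _ => div_nonneg hp0.le (hps0 i).le)
    have hint_eq : ∫⁻ x, ∏ i, ((‖f i (t i • x)‖₊ : ℝ≥0∞) ^ (ps i)) ^ (p / ps i) ∂μ
        = ∫⁻ x, (∏ i, (‖f i (t i • x)‖₊ : ℝ≥0∞)) ^ p ∂μ := by
      refine lintegral_congr fun x => ?_
      rw [← ENNReal.prod_rpow_of_nonneg hp0.le]
      refine Finset.prod_congr rfl fun i _ => ?_
      rw [← ENNReal.rpow_mul]
      congr 1
      rw [mul_comm]
      exact div_mul_cancel₀ p (hps0 i).ne'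
    rw [hint_eq] at hHolder
    -- assemble
    have hωt : ENNReal.ofReal (ω t) ≠ ∞ := ENNReal.ofReal_ne_top
    have hFp : ∀ x, F t x ^ p
        = ENNReal.ofReal (ω t) ^ p * (∏ i, (‖f i (t i • x)‖₊ : ℝ≥0∞)) ^ p := by
      intro x
      rw [hFdef]
      exact ENNReal.mul_rpow_of_nonneg _ _ hp0.le
    calc (∫⁻ x, F t x ^ p ∂μ) ^ (1/p)
        = (ENNReal.ofReal (ω t) ^ p * ∫⁻ x, (∏ i, (‖f i (t i • x)‖₊ : ℝ≥0∞)) ^ p ∂μ) ^ (1/p) := by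
          rw [← lintegral_const_mul' _ _ (ENNReal.rpow_ne_top_of_nonneg hp0.le hωt)]
          congr 1
          exact lintegral_congr fun x => hFp x
      _ = ENNReal.ofReal (ω t) *
            (∫⁻ x, (∏ i, (‖f i (t i • x)‖₊ : ℝ≥0∞)) ^ p ∂μ) ^ (1/p) := by
          rw [ENNReal.mul_rpow_of_nonneg _ _ (by positivity), ← ENNReal.rpow_mul,
            mul_one_div_cancel hp0.ne', ENNReal.rpow_one]
      _ ≤ ENNReal.ofReal (ω t) *
            (∏ i, (∫⁻ x, (‖f i (t i • x)‖₊ : ℝ≥0∞) ^ (ps i) ∂μ) ^ (p / ps i)) ^ (1/p) := by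
          exact mul_le_mul_right (ENNReal.rpow_le_rpow hHolder (by positivity)) _
      _ = ENNReal.ofReal (ω t) *
            ∏ i, (∫⁻ x, (‖f i (t i • x)‖₊ : ℝ≥0∞) ^ (ps i) ∂μ) ^ (1 / ps i) := by
          congr 1
          rw [← ENNReal.prod_rpow_of_nonneg (by positivity : (0:ℝ) ≤ 1/p)]
          refine Finset.prod_congr rfl fun i _ => ?_
          rw [← ENNReal.rpow_mul]
          congr 1
          rw [div_mul_div_comm, mul_one, mul_comm (ps i) p, ← div_div, div_self hp0.ne']
      _ = ENNReal.ofReal (ω t) *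
            ∏ i, (ENNReal.ofReal (t i ^ (-(n:ℝ)/ps i)) *
              eLpNorm (f i) (ENNReal.ofReal (ps i)) volume) := by
          congr 1
          refine Finset.prod_congr rfl fun i _ => ?_
          rw [hscale i,
            ENNReal.mul_rpow_of_nonneg _ _ (one_div_nonneg.2 (hps0 i).le)]
          congr 1
          · rw [ENNReal.ofReal_rpow_of_pos (inv_pos.2 (pow_pos (hti0 i) n))]
            congr 1
            rw [← Real.rpow_natCast (t i) n, ← Real.rpow_neg (hti0 i).le,
              ← Real.rpow_mul (hti0 i).le]
            congr 1
            ring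
          · rw [eLpNorm_eq_lintegral_rpow_enorm_toReal (by
                simp [ENNReal.ofReal_eq_zero, not_le]; linarith [hps i])
              ENNReal.ofReal_ne_top, ENNReal.toReal_ofReal (hps0 i).le]
            rfl
      _ = ENNReal.ofReal ((∏ i, t i ^ (-(n:ℝ)/ps i)) * ω t) * C := by
          rw [Finset.prod_mul_distrib, ← hCdef,
            ← ENNReal.ofReal_prod_of_nonneg
              (fun i _ => Real.rpow_nonneg (hti0 i).le _),
            ENNReal.ofReal_mul
              (Finset.prod_nonneg fun i _ => Real.rpow_nonneg (hti0 i).le _)]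
          ring
  -- final assembly
  have hPne0 : ENNReal.ofReal p ≠ 0 := by
    simp only [ne_eq, ENNReal.ofReal_eq_zero, not_le]; linarith
  rw [eLpNorm_eq_lintegral_rpow_enorm_toReal hPne0 ENNReal.ofReal_ne_top,
    ENNReal.toReal_ofReal hp0.le]
  calc (∫⁻ x, (‖∫ t in S, ω t • ∏ i, f i (t i • x)‖₊ : ℝ≥0∞) ^ p ∂μ) ^ (1/p)
      ≤ (∫⁻ x, (∫⁻ t, F t x ∂ν) ^ p ∂μ) ^ (1/p) := by
        gcongr
        exact step1 _
    _ ≤ ∫⁻ t, (∫⁻ x, F t x ^ p ∂μ) ^ (1/p) ∂ν := lintegral_minkowski μ ν hpq hFmeas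
    _ ≤ ∫⁻ t, ENNReal.ofReal ((∏ i, t i ^ (-(n:ℝ)/ps i)) * ω t) * C ∂ν :=
        lintegral_mono_ae step3
    _ = (∫⁻ t, ENNReal.ofReal ((∏ i, t i ^ (-(n:ℝ)/ps i)) * ω t) ∂ν) * C :=
        lintegral_mul_const' C _ hCne
    _ = ENNReal.ofReal (∫ t in S, (∏ i, t i ^ (-(n:ℝ)/ps i)) * ω t) * C := by
        congr 1
        refine (ofReal_integral_eq_lintegral_ofReal hA ?_).symm
        filter_upwards [hmemS'] with t ht
        have h1 : ∀ i, (0:ℝ) < t i := fun i => (ht i).1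
        exact mul_nonneg
          (Finset.prod_nonneg fun i _ => Real.rpow_nonneg (h1 i).le _) (hωnn t)
end

section
/- If λ < -1/p and 1 < p < ∞, then the central Morrey space Ḃ^{p,λ}(ℝⁿ) contains only the zero function (up to almost everywhere equality). -/
open MeasureTheory Set

/-- If `λ < -1/p`, then the central Morrey space `Ḃ^{p,λ}(ℝⁿ)` contains only the zero
function (up to a.e. equality). -/
theorem central_morrey_trivial (n : ℕ) (hn : 0 < n) (p lam : ℝ) (hp : 1 < p)
    (hlam : lam < -1/p) (f : EuclideanSpace ℝ (Fin n) → ℂ) (hf : Measurable f)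
    (hmorrey : (⨆ (R : ℝ) (_ : 0 < R),
        ((volume (Metric.ball (0 : EuclideanSpace ℝ (Fin n)) R)) ^ (-(1 + lam * p)) *
          ∫⁻ x in Metric.ball (0 : EuclideanSpace ℝ (Fin n)) R, ‖f x‖₊ ^ p) ^ (1/p)) < ⊤) :
    f =ᵐ[volume] 0 := by
  classical
  have hp0 : (0 : ℝ) < p := lt_trans one_pos hp
  set α : ℝ := -(1 + lam * p) with hα_def
  have hα : 0 < α := by
    have h1 : lam * p < (-1/p) * p := mul_lt_mul_of_pos_right hlam hp0
    have h2 : (-1/p) * p = -1 := by field_simp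
    simp only [hα_def]
    nlinarith
  haveI : Nonempty (Fin n) := ⟨⟨0, hn⟩⟩
  haveI : Nontrivial (EuclideanSpace ℝ (Fin n)) :=
    Module.nontrivial_of_finrank_pos (R := ℝ) (by rw [finrank_euclideanSpace_fin]; omega)
  set M := (⨆ (R : ℝ) (_ : 0 < R),
        ((volume (Metric.ball (0 : EuclideanSpace ℝ (Fin n)) R)) ^ α *
          ∫⁻ x in Metric.ball (0 : EuclideanSpace ℝ (Fin n)) R, ‖f x‖₊ ^ p) ^ (1/p))
    with hM_def
  set C := M ^ p with hC_def
  have hC : C ≠ ⊤ := (ENNReal.rpow_lt_top_of_nonneg hp0.le hmorrey.ne).ne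
  -- key pointwise bound
  have key : ∀ R : ℝ, 0 < R →
      (volume (Metric.ball (0 : EuclideanSpace ℝ (Fin n)) R)) ^ α *
        (∫⁻ x in Metric.ball (0 : EuclideanSpace ℝ (Fin n)) R, ‖f x‖₊ ^ p) ≤ C := by
    intro R hR
    have h1 : ((volume (Metric.ball (0 : EuclideanSpace ℝ (Fin n)) R)) ^ α *
        ∫⁻ x in Metric.ball (0 : EuclideanSpace ℝ (Fin n)) R, ‖f x‖₊ ^ p) ^ (1/p) ≤ M := by
      rw [hM_def]
      exact le_iSup₂ (f := fun (R : ℝ) (_ : 0 < R) =>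
        ((volume (Metric.ball (0 : EuclideanSpace ℝ (Fin n)) R)) ^ α *
          ∫⁻ x in Metric.ball (0 : EuclideanSpace ℝ (Fin n)) R, ‖f x‖₊ ^ p) ^ (1/p)) R hR
    have h2 := ENNReal.rpow_le_rpow h1 hp0.le
    rwa [← ENNReal.rpow_mul, one_div, inv_mul_cancel₀ hp0.ne', ENNReal.rpow_one] at h2
  -- volume of balls tends to infinity
  have hvol : Filter.Tendsto
      (fun R : ℝ => volume (Metric.ball (0 : EuclideanSpace ℝ (Fin n)) R))
      Filter.atTop (nhds ⊤) := by
    have hb0 : volume (Metric.ball (0 : EuclideanSpace ℝ (Fin n)) 1) ≠ 0 :=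
      (Metric.measure_ball_pos volume (0 : EuclideanSpace ℝ (Fin n)) one_pos).ne'
    have hmain : Filter.Tendsto (fun R : ℝ =>
        ENNReal.ofReal (R ^ Module.finrank ℝ (EuclideanSpace ℝ (Fin n))) *
          volume (Metric.ball (0 : EuclideanSpace ℝ (Fin n)) 1))
        Filter.atTop (nhds ⊤) := by
      have h1 : Filter.Tendsto
          (fun R : ℝ => ENNReal.ofReal (R ^ Module.finrank ℝ (EuclideanSpace ℝ (Fin n))))
          Filter.atTop (nhds ⊤) := by
        refine ENNReal.tendsto_ofReal_atTop.comp (Filter.tendsto_pow_atTop ?_)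
        rw [finrank_euclideanSpace_fin]
        omega
      have := ENNReal.Tendsto.mul_const h1
        (b := volume (Metric.ball (0 : EuclideanSpace ℝ (Fin n)) 1)) (Or.inl (by simp))
      simpa [ENNReal.top_mul hb0] using this
    refine hmain.congr' ?_
    filter_upwards [Filter.eventually_gt_atTop (0 : ℝ)] with R hR
    exact (Measure.addHaar_ball_of_pos volume (0 : EuclideanSpace ℝ (Fin n)) hR).symm
  have hvolα : Filter.Tendsto
      (fun R : ℝ => (volume (Metric.ball (0 : EuclideanSpace ℝ (Fin n)) R)) ^ α)
      Filter.atTop (nhds ⊤) := (ENNReal.tendsto_rpow_at_top hα).comp hvol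
  -- each local integral is zero
  have hI : ∀ R : ℝ, 0 < R →
      (∫⁻ x in Metric.ball (0 : EuclideanSpace ℝ (Fin n)) R, ‖f x‖₊ ^ p) = 0 := by
    intro R hR
    have hbound : ∀ R' : ℝ, R ≤ R' →
        (∫⁻ x in Metric.ball (0 : EuclideanSpace ℝ (Fin n)) R, ‖f x‖₊ ^ p) ≤
          C / (volume (Metric.ball (0 : EuclideanSpace ℝ (Fin n)) R')) ^ α := by
      intro R' hRR'
      have hR' : 0 < R' := lt_of_lt_of_le hR hRR'
      have hmono : (∫⁻ x in Metric.ball (0 : EuclideanSpace ℝ (Fin n)) R, ‖f x‖₊ ^ p) ≤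
          ∫⁻ x in Metric.ball (0 : EuclideanSpace ℝ (Fin n)) R', ‖f x‖₊ ^ p :=
        lintegral_mono_set (Metric.ball_subset_ball hRR')
      have hvne : volume (Metric.ball (0 : EuclideanSpace ℝ (Fin n)) R') ≠ 0 :=
        (Metric.measure_ball_pos volume (0 : EuclideanSpace ℝ (Fin n)) hR').ne'
      have hne : (volume (Metric.ball (0 : EuclideanSpace ℝ (Fin n)) R')) ^ α ≠ 0 := by
        rw [Ne, ENNReal.rpow_eq_zero_iff]
        push_neg
        exact ⟨fun h => absurd h hvne, fun h => absurd h measure_ball_lt_top.ne⟩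
      have hnt : (volume (Metric.ball (0 : EuclideanSpace ℝ (Fin n)) R')) ^ α ≠ ⊤ :=
        (ENNReal.rpow_lt_top_of_nonneg hα.le measure_ball_lt_top.ne).ne
      refine hmono.trans ?_
      rw [ENNReal.le_div_iff_mul_le (Or.inl hne) (Or.inl hnt), mul_comm]
      exact key R' hR'
    have hlim : Filter.Tendsto (fun R' : ℝ =>
        C / (volume (Metric.ball (0 : EuclideanSpace ℝ (Fin n)) R')) ^ α)
        Filter.atTop (nhds 0) := by
      have := ENNReal.Tendsto.const_div (a := C) hvolα (Or.inr hC)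
      simpa [ENNReal.div_top] using this
    have hle : (∫⁻ x in Metric.ball (0 : EuclideanSpace ℝ (Fin n)) R, ‖f x‖₊ ^ p) ≤ 0 := by
      refine ge_of_tendsto hlim ?_
      filter_upwards [Filter.eventually_ge_atTop R] with R' hR'
      exact hbound R' hR'
    exact le_antisymm hle bot_le
  -- measurability
  have hmeas : Measurable fun x : EuclideanSpace ℝ (Fin n) => ((‖f x‖₊ : ENNReal)) ^ p :=
    (hf.enorm).pow_const p
  -- a.e. zero on each ball
  have hball : ∀ k : ℕ, ∀ᵐ x : EuclideanSpace ℝ (Fin n) ∂volume,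
      x ∈ Metric.ball (0 : EuclideanSpace ℝ (Fin n)) (k + 1 : ℝ) → f x = 0 := by
    intro k
    have h0 : (∫⁻ x in Metric.ball (0 : EuclideanSpace ℝ (Fin n)) (k + 1 : ℝ),
        ‖f x‖₊ ^ p) = 0 := hI (k + 1 : ℝ) (by positivity)
    have hz := (lintegral_eq_zero_iff hmeas).mp h0
    have h1 := (ae_restrict_iff' measurableSet_ball).mp hz
    filter_upwards [h1] with x hx hxball
    have h2 := hx hxball
    simp only [Pi.zero_apply, ENNReal.rpow_eq_zero_iff] at h2
    rcases h2 with ⟨h3, -⟩ | ⟨h3, -⟩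
    · simpa using h3
    · exact absurd h3 (by simp)
  have hall : ∀ᵐ x : EuclideanSpace ℝ (Fin n) ∂volume, ∀ k : ℕ,
      x ∈ Metric.ball (0 : EuclideanSpace ℝ (Fin n)) (k + 1 : ℝ) → f x = 0 :=
    ae_all_iff.mpr hball
  filter_upwards [hall] with x hx
  obtain ⟨k, hk⟩ := exists_nat_gt ‖x‖
  have hxmem : x ∈ Metric.ball (0 : EuclideanSpace ℝ (Fin n)) (k + 1 : ℝ) := by
    simp only [Metric.mem_ball, dist_zero_right]
    linarith
  exact hx k hxmem
end

section
/- For 0 < α < 1, define ω̃(s) := e^{s(1 - n/p)} s^{-1+α} for 0 < s ≤ 1, ω̃(s) := e^{s(1-n/p)} s^{-1-α} for s > 1, and ω̃(0) := 0, and set ω(t) := ω̃(log(1/t)) for 0 < t ≤ 1, ω(0) := 0 (where 1 < p < ∞ and n ≥ 1). Then A := ∫₀¹ t^{-n/p} ω(t) dt < ∞ while C := ∫₀¹ t^{-n/p} ω(t) log(2/t) dt = ∞. -/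
open MeasureTheory Set

private lemma rexp_neg_image (a : ℝ) :
    (fun s : ℝ => Real.exp (-s)) '' (Ioi a) = Ioo 0 (Real.exp (-a)) := by
  ext t
  constructor
  · rintro ⟨s, hs, rfl⟩
    exact ⟨Real.exp_pos _, Real.exp_lt_exp.2 (by simpa using hs)⟩
  · rintro ⟨h0, h1⟩
    refine ⟨-Real.log t, ?_, by simp [Real.exp_log h0]⟩
    have := (Real.log_lt_log_iff h0 (Real.exp_pos _)).2 h1
    rw [Real.log_exp] at this
    rw [mem_Ioi]
    linarith

private lemma cov (g : ℝ → ℝ) (a : ℝ) :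
    IntegrableOn g (Ioo 0 (Real.exp (-a))) ↔
      IntegrableOn (fun s => Real.exp (-s) * g (Real.exp (-s))) (Ioi a) := by
  have hf' : ∀ x ∈ Ioi a, HasDerivWithinAt (fun s : ℝ => Real.exp (-s))
      (-Real.exp (-x)) (Ioi a) x := fun x _ => by
    have h := ((Real.hasDerivAt_exp (-x)).comp x (hasDerivAt_neg x)).hasDerivWithinAt (s := Ioi a)
    simp only [mul_neg, mul_one] at h
    exact h
  have hinj : InjOn (fun s : ℝ => Real.exp (-s)) (Ioi a) :=
    (Real.exp_injective.comp neg_injective).injOn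
  have := integrableOn_image_iff_integrableOn_abs_deriv_smul measurableSet_Ioi hf' hinj g
  rw [rexp_neg_image] at this
  simpa [abs_of_pos (Real.exp_pos _), smul_eq_mul] using this

/-- The example (1.5): with `ω̃(s) = e^{s(1-n/p)} s^{-1+α}` for `0 < s ≤ 1`,
`ω̃(s) = e^{s(1-n/p)} s^{-1-α}` for `s > 1`, `ω̃(0) = 0`, and
`ω(t) = ω̃(log(1/t))`, one has `A = ∫₀¹ t^{-n/p} ω(t) dt < ∞` while
`C = ∫₀¹ t^{-n/p} ω(t) log(2/t) dt = ∞`. -/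
theorem counterexample_A_finite_C_infinite (n : ℕ) (hn : 1 ≤ n) (p α : ℝ)
    (hp : 1 < p) (hα0 : 0 < α) (hα1 : α < 1) :
    IntegrableOn
      (fun t : ℝ => t ^ (-(n:ℝ)/p) *
        (if Real.log (1/t) = 0 then 0
         else if Real.log (1/t) ≤ 1 then
           Real.exp (Real.log (1/t) * (1 - (n:ℝ)/p)) * Real.log (1/t) ^ (-1 + α)
         else Real.exp (Real.log (1/t) * (1 - (n:ℝ)/p)) * Real.log (1/t) ^ (-1 - α)))
      (Ioo 0 1) ∧
    ¬ IntegrableOn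
      (fun t : ℝ => t ^ (-(n:ℝ)/p) *
        (if Real.log (1/t) = 0 then 0
         else if Real.log (1/t) ≤ 1 then
           Real.exp (Real.log (1/t) * (1 - (n:ℝ)/p)) * Real.log (1/t) ^ (-1 + α)
         else Real.exp (Real.log (1/t) * (1 - (n:ℝ)/p)) * Real.log (1/t) ^ (-1 - α)) *
        Real.log (2/t))
      (Ioo 0 1) := by
  set F : ℝ → ℝ := fun t : ℝ => t ^ (-(n:ℝ)/p) *
        (if Real.log (1/t) = 0 then 0
         else if Real.log (1/t) ≤ 1 then
           Real.exp (Real.log (1/t) * (1 - (n:ℝ)/p)) * Real.log (1/t) ^ (-1 + α)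
         else Real.exp (Real.log (1/t) * (1 - (n:ℝ)/p)) * Real.log (1/t) ^ (-1 - α)) with hF
  -- key pointwise computation
  have key : ∀ s : ℝ, 0 < s → Real.exp (-s) * F (Real.exp (-s)) =
      (if s ≤ 1 then s ^ (-1 + α) else s ^ (-1 - α)) := by
    intro s hs
    have hlog : Real.log (1 / Real.exp (-s)) = s := by
      rw [one_div, ← Real.exp_neg, Real.log_exp, neg_neg]
    have hrpow : (Real.exp (-s)) ^ (-(n:ℝ)/p) = Real.exp (s * ((n:ℝ)/p)) := by
      rw [← Real.exp_mul]; ring_nf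
    have hexp : Real.exp (-s) * Real.exp (s * ((n:ℝ)/p)) *
        Real.exp (s * (1 - (n:ℝ)/p)) = 1 := by
      rw [← Real.exp_add, ← Real.exp_add,
        show -s + s * ((n:ℝ)/p) + s * (1 - (n:ℝ)/p) = 0 by ring, Real.exp_zero]
    rw [hF]
    simp only [hlog, hrpow, hs.ne', if_false]
    split_ifs with h
    · calc Real.exp (-s) * (Real.exp (s * ((n:ℝ)/p)) *
            (Real.exp (s * (1 - (n:ℝ)/p)) * s ^ (-1 + α)))
          = (Real.exp (-s) * Real.exp (s * ((n:ℝ)/p)) *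
            Real.exp (s * (1 - (n:ℝ)/p))) * s ^ (-1 + α) := by ring
        _ = s ^ (-1 + α) := by rw [hexp, one_mul]
    · calc Real.exp (-s) * (Real.exp (s * ((n:ℝ)/p)) *
            (Real.exp (s * (1 - (n:ℝ)/p)) * s ^ (-1 - α)))
          = (Real.exp (-s) * Real.exp (s * ((n:ℝ)/p)) *
            Real.exp (s * (1 - (n:ℝ)/p))) * s ^ (-1 - α) := by ring
        _ = s ^ (-1 - α) := by rw [hexp, one_mul]
  constructor
  · -- A < ∞
    have h0 : Ioo (0:ℝ) 1 = Ioo 0 (Real.exp (-0)) := by norm_num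
    rw [h0, cov F 0]
    have : IntegrableOn (fun s : ℝ => if s ≤ 1 then s ^ (-1 + α) else s ^ (-1 - α))
        (Ioi (0:ℝ)) := by
      have hsplit : Ioi (0:ℝ) = Ioc 0 1 ∪ Ioi 1 := by
        rw [Ioc_union_Ioi_eq_Ioi zero_le_one]
      rw [hsplit]
      apply IntegrableOn.union
      · apply IntegrableOn.congr_fun (f := fun s : ℝ => s ^ (-1 + α))
        · have := intervalIntegral.intervalIntegrable_rpow' (a := 0) (b := 1)
            (r := -1 + α) (by linarith)
          rw [intervalIntegrable_iff, uIoc_of_le zero_le_one] at this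
          exact this
        · intro s hs; simp [hs.2]
        · exact measurableSet_Ioc
      · apply IntegrableOn.congr_fun (f := fun s : ℝ => s ^ (-1 - α))
        · exact (integrableOn_Ioi_rpow_iff zero_lt_one).2 (by linarith)
        · intro s hs
          rw [mem_Ioi] at hs
          simp [not_le.2 hs]
        · exact measurableSet_Ioi
    apply this.congr_fun _ measurableSet_Ioi
    intro s hs
    exact (key s hs).symm
  · -- C = ∞
    intro hC
    have hsub : Ioo (0:ℝ) (Real.exp (-1)) ⊆ Ioo 0 1 := by
      apply Ioo_subset_Ioo le_rfl
      have : Real.exp (-1 : ℝ) < 1 := Real.exp_lt_one_iff.mpr (by norm_num)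
      linarith
    have h1 : IntegrableOn (fun t => F t * Real.log (2/t)) (Ioo 0 (Real.exp (-1))) :=
      hC.mono_set hsub
    rw [cov (fun t => F t * Real.log (2/t)) 1] at h1
    have h2 : IntegrableOn (fun s : ℝ => s ^ (-1 - α) * (Real.log 2 + s)) (Ioi (1:ℝ)) := by
      apply h1.congr_fun _ measurableSet_Ioi
      intro s hs
      rw [mem_Ioi] at hs
      have hs0 : 0 < s := by linarith
      have hl : Real.log (2 / Real.exp (-s)) = Real.log 2 + s := by
        rw [Real.log_div (by norm_num) (Real.exp_ne_zero _), Real.log_exp]; ring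
      show Real.exp (-s) * (F (Real.exp (-s)) * Real.log (2 / Real.exp (-s)))
          = s ^ (-1 - α) * (Real.log 2 + s)
      rw [show Real.exp (-s) * (F (Real.exp (-s)) * Real.log (2 / Real.exp (-s)))
          = (Real.exp (-s) * F (Real.exp (-s))) * Real.log (2 / Real.exp (-s)) from by ring,
        key s hs0, hl, if_neg (not_le.2 hs)]
    have h3 : IntegrableOn (fun s : ℝ => s ^ (-α)) (Ioi (1:ℝ)) := by
      apply Integrable.mono' h2
      · exact (Measurable.aestronglyMeasurable (by measurability))
      · filter_upwards [ae_restrict_mem measurableSet_Ioi] with s hs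
        rw [mem_Ioi] at hs
        have hs0 : 0 < s := by linarith
        rw [Real.norm_eq_abs, abs_of_pos (Real.rpow_pos_of_pos hs0 _)]
        have : s ^ (-α) = s ^ (-1 - α) * s := by
          rw [← Real.rpow_add_one hs0.ne']; ring_nf
        rw [this]
        have h2le : (0:ℝ) ≤ Real.log 2 := Real.log_nonneg (by norm_num)
        have := Real.rpow_pos_of_pos hs0 (-1 - α)
        nlinarith
    rw [integrableOn_Ioi_rpow_iff zero_lt_one] at h3
    linarith
end

section
/- Let 1 < p < ∞ and q with 1/p + 1/q = 1, and let ω : [0,1] → [0,∞) be integrable with ∫₀¹ t^{-n/p} ω(t) dt < ∞. Then for all f ∈ L^p(ℝⁿ) and g ∈ L^q(ℝⁿ), the duality identity ∫_{ℝⁿ} g(x) H_ω f(x) dx = ∫_{ℝⁿ} f(x) G_ω g(x) dx holds, where H_ω f(x) = ∫₀¹ f(tx) ω(t) dt and G_ω g(x) = ∫₀¹ g(x/t) t^{-n} ω(t) dt. -/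
open MeasureTheory Set
open Function
open scoped ENNReal

lemma aux_eLpNorm_comp_smul {n : ℕ} (f : EuclideanSpace ℝ (Fin n) → ℂ)
    (hf : AEStronglyMeasurable f (volume : Measure (EuclideanSpace ℝ (Fin n))))
    {t : ℝ} (ht : t ≠ 0) (r : ℝ≥0∞) :
    eLpNorm (fun x => f (t • x)) r (volume : Measure (EuclideanSpace ℝ (Fin n)))
      = ENNReal.ofReal |((t ^ n : ℝ))⁻¹| ^ (1/r).toReal * eLpNorm f r volume := by
  have hrank : Module.finrank ℝ (EuclideanSpace ℝ (Fin n)) = n := finrank_euclideanSpace_fin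
  have hmap := Measure.map_addHaar_smul (volume : Measure (EuclideanSpace ℝ (Fin n))) ht
  rw [hrank] at hmap
  have hc0 : ENNReal.ofReal |((t ^ n : ℝ))⁻¹| ≠ 0 := by
    rw [Ne, ENNReal.ofReal_eq_zero, not_le, abs_pos]
    exact inv_ne_zero (pow_ne_zero _ ht)
  have hfs : AEStronglyMeasurable f (Measure.map (t • ·) volume) := by
    rw [hmap]; exact hf.mono_ac Measure.smul_absolutelyContinuous
  calc eLpNorm (fun x => f (t • x)) r volume
      = eLpNorm f r (Measure.map (t • ·) volume) :=
        (eLpNorm_map_measure hfs (measurable_const_smul t).aemeasurable).symm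
    _ = _ := by
        rw [hmap, eLpNorm_smul_measure_of_ne_zero hc0, smul_eq_mul]

lemma aux_holder {α : Type*} [MeasurableSpace α] {μ : Measure α} {r s : ℝ≥0∞}
    (hrs : 1/r + 1/s = 1) (φ ψ : α → ℂ) (hφ : MemLp φ r μ) (hψ : MemLp ψ s μ) :
    Integrable (fun x => φ x * ψ x) μ ∧
      ∫ x, ‖φ x * ψ x‖ ∂μ ≤ (eLpNorm φ r μ).toReal * (eLpNorm ψ s μ).toReal := by
  have h1 : eLpNorm (fun x => φ x * ψ x) 1 μ ≤ eLpNorm φ r μ * eLpNorm ψ s μ := by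
    have := eLpNorm_le_eLpNorm_mul_eLpNorm'_of_norm (p := r) (q := s) (r := 1) hφ.1 hψ.1 (· * ·) 1
      (Filter.Eventually.of_forall fun x => by simp [norm_mul]) (hpqr := ⟨by simpa using hrs⟩)
    simpa using this
  have hint : Integrable (fun x => φ x * ψ x) μ := by
    refine memLp_one_iff_integrable.mp ⟨hφ.1.mul hψ.1, ?_⟩
    exact h1.trans_lt (ENNReal.mul_lt_top hφ.2 hψ.2)
  refine ⟨hint, ?_⟩
  have h2 : ∫ x, ‖φ x * ψ x‖ ∂μ = (eLpNorm (fun x => φ x * ψ x) 1 μ).toReal := by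
    rw [eLpNorm_one_eq_lintegral_enorm, integral_norm_eq_lintegral_enorm hint.1]
  rw [h2, ← ENNReal.toReal_mul]
  exact ENNReal.toReal_mono (ENNReal.mul_ne_top hφ.2.ne hψ.2.ne) h1

lemma aux_ae_ae {n : ℕ} (f f' : EuclideanSpace ℝ (Fin n) → ℂ)
    (h : f =ᵐ[(volume : Measure (EuclideanSpace ℝ (Fin n)))] f')
    (c : ℝ → ℝ) (hcm : Measurable c) (hc : ∀ t ∈ Ioo (0:ℝ) 1, c t ≠ 0) :
    ∀ᵐ x ∂(volume : Measure (EuclideanSpace ℝ (Fin n))),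
      ∀ᵐ t ∂((volume : Measure ℝ).restrict (Ioo (0:ℝ) 1)), f (c t • x) = f' (c t • x) := by
  have hnull : volume {y | f y ≠ f' y} = 0 := h
  obtain ⟨N, hNsub, hNm, hN0⟩ := exists_measurable_superset_of_null hnull
  set μt := (volume : Measure ℝ).restrict (Ioo (0:ℝ) 1) with hμt
  have hψ : Measurable fun z : (EuclideanSpace ℝ (Fin n)) × ℝ => c z.2 • z.1 :=
    (hcm.comp measurable_snd).smul measurable_fst
  have hSm : MeasurableSet {z : (EuclideanSpace ℝ (Fin n)) × ℝ | c z.2 • z.1 ∈ N} := hψ hNm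
  have hS0 : ((volume : Measure (EuclideanSpace ℝ (Fin n))).prod μt)
      {z : (EuclideanSpace ℝ (Fin n)) × ℝ | c z.2 • z.1 ∈ N} = 0 := by
    rw [Measure.prod_apply_symm hSm]
    have hz : ∀ᵐ t ∂μt, volume ((fun x : EuclideanSpace ℝ (Fin n) => (x, t)) ⁻¹'
        {z : (EuclideanSpace ℝ (Fin n)) × ℝ | c z.2 • z.1 ∈ N}) = 0 := by
      filter_upwards [ae_restrict_mem measurableSet_Ioo] with t ht
      have he : ((fun x : EuclideanSpace ℝ (Fin n) => (x, t)) ⁻¹'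
          {z : (EuclideanSpace ℝ (Fin n)) × ℝ | c z.2 • z.1 ∈ N}) = (c t • ·) ⁻¹' N := rfl
      rw [he, Measure.addHaar_preimage_smul volume (hc t ht), hN0, mul_zero]
    rw [lintegral_congr_ae hz, lintegral_zero]
  have hae : ∀ᵐ z ∂((volume : Measure (EuclideanSpace ℝ (Fin n))).prod μt),
      f (c z.2 • z.1) = f' (c z.2 • z.1) := by
    rw [ae_iff]
    refine measure_mono_null (fun z hz => ?_) hS0
    exact hNsub hz
  exact Measure.ae_ae_of_ae_prod hae


lemma aux_integrable_prod {n : ℕ} (K : ℝ → EuclideanSpace ℝ (Fin n) → ℂ) (B : ℝ → ℝ)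
    (hKm : AEStronglyMeasurable (uncurry K)
      (((volume : Measure ℝ).restrict (Ioo (0:ℝ) 1)).prod volume))
    (hslice : ∀ t ∈ Ioo (0:ℝ) 1, Integrable (K t) volume)
    (hbound : ∀ t ∈ Ioo (0:ℝ) 1, ∫ x, ‖K t x‖ ≤ B t)
    (hB : IntegrableOn B (Ioo (0:ℝ) 1)) :
    Integrable (uncurry K) (((volume : Measure ℝ).restrict (Ioo (0:ℝ) 1)).prod volume) := by
  rw [integrable_prod_iff hKm]
  refine ⟨?_, ?_⟩
  · filter_upwards [ae_restrict_mem measurableSet_Ioo] with t ht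
    exact hslice t ht
  · refine Integrable.mono' hB hKm.norm.integral_prod_right' ?_
    filter_upwards [ae_restrict_mem measurableSet_Ioo] with t ht
    rw [Real.norm_eq_abs, abs_of_nonneg (integral_nonneg fun x => norm_nonneg _)]
    exact hbound t ht

lemma aux_main (n : ℕ) (p q : ℝ) (hp : 1 < p) (hpq : 1/p + 1/q = 1)
    (ω : ℝ → ℝ) (hωm : Measurable ω) (hωnn : ∀ t ∈ Icc (0:ℝ) 1, 0 ≤ ω t)
    (hA : IntegrableOn (fun t => t ^ (-(n:ℝ)/p) * ω t) (Ioo 0 1))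
    (f g : EuclideanSpace ℝ (Fin n) → ℂ)
    (hfm : StronglyMeasurable f) (hgm : StronglyMeasurable g)
    (hf : MemLp f (ENNReal.ofReal p) volume) (hg : MemLp g (ENNReal.ofReal q) volume) :
    ∫ x, g x * ∫ t in Ioo (0:ℝ) 1, ω t • f (t • x) =
      ∫ x, f x * ∫ t in Ioo (0:ℝ) 1, (ω t * t ^ (-(n:ℤ))) • g (t⁻¹ • x) := by
  have hrank : Module.finrank ℝ (EuclideanSpace ℝ (Fin n)) = n := finrank_euclideanSpace_fin
  have hp0 : 0 < p := by linarith
  have hq0 : 0 < q := by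
    have : 1/q = 1 - 1/p := by linarith
    have h2 : 0 < 1/q := by rw [this, sub_pos, div_lt_one hp0]; exact hp
    exact one_div_pos.mp h2
  set p' : ℝ≥0∞ := ENNReal.ofReal p with hp'def
  set q' : ℝ≥0∞ := ENNReal.ofReal q with hq'def
  have hinvp : 1 / p' = ENNReal.ofReal (1/p) := by
    rw [one_div, one_div, ← ENNReal.ofReal_inv_of_pos hp0]
  have hinvq : 1 / q' = ENNReal.ofReal (1/q) := by
    rw [one_div, one_div, ← ENNReal.ofReal_inv_of_pos hq0]
  have hconj : 1 / p' + 1 / q' = 1 := by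
    rw [hinvp, hinvq, ← ENNReal.ofReal_add (by positivity) (by positivity), hpq,
      ENNReal.ofReal_one]
  have hconj' : 1 / q' + 1 / p' = 1 := by rw [add_comm]; exact hconj
  set μt := (volume : Measure ℝ).restrict (Ioo (0:ℝ) 1) with hμt
  set Cf := (eLpNorm f p' volume).toReal with hCf
  set Cg := (eLpNorm g q' volume).toReal with hCg
  -- dilation facts
  have hfdil : ∀ t : ℝ, t ∈ Ioo (0:ℝ) 1 → MemLp (fun x => f (t • x)) p' volume ∧
      (eLpNorm (fun x => f (t • x)) p' volume).toReal = t ^ (-(n:ℝ)/p) * Cf := by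
    intro t ht
    have ht0 : (0:ℝ) < t := ht.1
    have hval := aux_eLpNorm_comp_smul f hf.1 ht0.ne' p'
    have habs : |((t ^ n : ℝ))⁻¹| = (t ^ n)⁻¹ := abs_of_pos (by positivity)
    have hexp : (1 / p').toReal = 1 / p := by
      rw [hinvp, ENNReal.toReal_ofReal (by positivity)]
    have hrpow : ((t ^ n : ℝ))⁻¹ ^ ((1:ℝ)/p) = t ^ (-(n:ℝ)/p) := by
      rw [← Real.rpow_natCast t n, ← Real.rpow_neg ht0.le, ← Real.rpow_mul ht0.le]
      congr 1; ring
    have h2 : eLpNorm (fun x => f (t • x)) p' volume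
        = ENNReal.ofReal (t ^ (-(n:ℝ)/p)) * eLpNorm f p' volume := by
      rw [hval, habs, hexp, ENNReal.ofReal_rpow_of_pos (by positivity), hrpow]
    refine ⟨⟨(hfm.measurable.comp (measurable_const_smul t)).aestronglyMeasurable, ?_⟩, ?_⟩
    · rw [h2]; exact ENNReal.mul_lt_top ENNReal.ofReal_lt_top hf.2
    · rw [h2, ENNReal.toReal_mul, ENNReal.toReal_ofReal (Real.rpow_nonneg ht0.le _)]
  have hgdil : ∀ t : ℝ, t ∈ Ioo (0:ℝ) 1 → MemLp (fun x => g (t⁻¹ • x)) q' volume ∧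
      (eLpNorm (fun x => g (t⁻¹ • x)) q' volume).toReal = t ^ ((n:ℝ)/q) * Cg := by
    intro t ht
    have ht0 : (0:ℝ) < t := ht.1
    have hval := aux_eLpNorm_comp_smul g hg.1 (inv_ne_zero ht0.ne') q'
    have habs : |((t⁻¹ ^ n : ℝ))⁻¹| = t ^ n := by
      rw [inv_pow, inv_inv]; exact abs_of_pos (by positivity)
    have hexp : (1 / q').toReal = 1 / q := by
      rw [hinvq, ENNReal.toReal_ofReal (by positivity)]
    have hrpow : ((t ^ n : ℝ)) ^ ((1:ℝ)/q) = t ^ ((n:ℝ)/q) := by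
      rw [← Real.rpow_natCast t n, ← Real.rpow_mul ht0.le]
      congr 1; ring
    have h2 : eLpNorm (fun x => g (t⁻¹ • x)) q' volume
        = ENNReal.ofReal (t ^ ((n:ℝ)/q)) * eLpNorm g q' volume := by
      rw [hval, habs, hexp, ENNReal.ofReal_rpow_of_pos (by positivity), hrpow]
    refine ⟨⟨(hgm.measurable.comp (measurable_const_smul t⁻¹)).aestronglyMeasurable, ?_⟩, ?_⟩
    · rw [h2]; exact ENNReal.mul_lt_top ENNReal.ofReal_lt_top hg.2
    · rw [h2, ENNReal.toReal_mul, ENNReal.toReal_ofReal (Real.rpow_nonneg ht0.le _)]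
  set K : ℝ → EuclideanSpace ℝ (Fin n) → ℂ := fun t x => ω t • (g x * f (t • x)) with hKdef
  set K' : ℝ → EuclideanSpace ℝ (Fin n) → ℂ :=
    fun t x => (ω t * t ^ (-(n:ℤ))) • (f x * g (t⁻¹ • x)) with hK'def
  set B : ℝ → ℝ := fun t => (t ^ (-(n:ℝ)/p) * ω t) * (Cg * Cf) with hBdef
  have hBint : IntegrableOn B (Ioo (0:ℝ) 1) := hA.mul_const _
  have hzpowm : Measurable fun t : ℝ => t ^ (-(n:ℤ)) := by
    have := ((measurable_id (α := ℝ)).pow_const n).inv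
    convert this using 1
    ext t
    simp [zpow_neg]
  have hKm : AEStronglyMeasurable (uncurry K) (μt.prod volume) := by
    have : Measurable (uncurry K) := by
      have h1 : Measurable fun z : ℝ × EuclideanSpace ℝ (Fin n) => f (z.1 • z.2) :=
        hfm.measurable.comp (Continuous.measurable (continuous_fst.smul continuous_snd))
      exact ((hωm.comp measurable_fst)).smul ((hgm.measurable.comp measurable_snd).mul h1)
    exact this.aestronglyMeasurable
  have hK'm : AEStronglyMeasurable (uncurry K') (μt.prod volume) := by
    have : Measurable (uncurry K') := by
      have h1 : Measurable fun z : ℝ × EuclideanSpace ℝ (Fin n) => g (z.1⁻¹ • z.2) :=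
        hgm.measurable.comp (((measurable_fst : Measurable fun z : ℝ × EuclideanSpace ℝ (Fin n) => z.1).inv).smul measurable_snd)
      exact ((hωm.comp measurable_fst).mul (hzpowm.comp measurable_fst)).smul
        ((hfm.measurable.comp measurable_snd).mul h1)
    exact this.aestronglyMeasurable
  have hKslice : ∀ t ∈ Ioo (0:ℝ) 1, Integrable (K t) volume ∧ (∫ x, ‖K t x‖) ≤ B t := by
    intro t ht
    obtain ⟨hft, hftval⟩ := hfdil t ht
    obtain ⟨hold, hbound⟩ := aux_holder hconj' g (fun x => f (t • x)) hg hft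
    rw [hftval] at hbound
    refine ⟨hold.smul (ω t), ?_⟩
    calc (∫ x, ‖K t x‖) = ∫ x, |ω t| * ‖g x * f (t • x)‖ := by
          simp only [hKdef, norm_smul, Real.norm_eq_abs]
      _ = |ω t| * ∫ x, ‖g x * f (t • x)‖ := integral_const_mul _ _
      _ ≤ |ω t| * (Cg * (t ^ (-(n:ℝ)/p) * Cf)) :=
          mul_le_mul_of_nonneg_left hbound (abs_nonneg _)
      _ = B t := by
          rw [abs_of_nonneg (hωnn t (Ioo_subset_Icc_self ht)), hBdef]; ring
  have hK'slice : ∀ t ∈ Ioo (0:ℝ) 1, Integrable (K' t) volume ∧ (∫ x, ‖K' t x‖) ≤ B t := by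
    intro t ht
    have ht0 : (0:ℝ) < t := ht.1
    obtain ⟨hgt, hgtval⟩ := hgdil t ht
    obtain ⟨hold, hbound⟩ := aux_holder hconj f (fun x => g (t⁻¹ • x)) hf hgt
    rw [hgtval] at hbound
    have hzpow : |(t ^ (-(n:ℤ)) : ℝ)| = t ^ (-(n:ℝ)) := by
      rw [zpow_neg, zpow_natCast, abs_of_pos (by positivity), ← Real.rpow_natCast t n,
        ← Real.rpow_neg ht0.le]
    refine ⟨hold.smul (ω t * t ^ (-(n:ℤ))), ?_⟩
    have hexp2 : -(n:ℝ) + (n:ℝ)/q = -(n:ℝ)/p := by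
      have hpq2 : q + p = p * q := by field_simp at hpq; linarith
      field_simp
      nlinarith [hpq2]
    calc (∫ x, ‖K' t x‖) = |ω t * t ^ (-(n:ℤ))| * ∫ x, ‖f x * g (t⁻¹ • x)‖ := by
          rw [← integral_const_mul]
          simp only [hK'def, norm_smul, Real.norm_eq_abs]
      _ ≤ |ω t * t ^ (-(n:ℤ))| * (Cf * (t ^ ((n:ℝ)/q) * Cg)) :=
          mul_le_mul_of_nonneg_left hbound (abs_nonneg _)
      _ = |ω t| * (t ^ (-(n:ℝ)) * t ^ ((n:ℝ)/q)) * (Cf * Cg) := by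
          rw [abs_mul, hzpow]; ring
      _ = B t := by
          rw [← Real.rpow_add ht0, hexp2,
            abs_of_nonneg (hωnn t (Ioo_subset_Icc_self ht)), hBdef]; ring
  have hKint : Integrable (uncurry K) (μt.prod volume) :=
    aux_integrable_prod K B hKm (fun t ht => (hKslice t ht).1) (fun t ht => (hKslice t ht).2) hBint
  have hK'int : Integrable (uncurry K') (μt.prod volume) :=
    aux_integrable_prod K' B hK'm (fun t ht => (hK'slice t ht).1)
      (fun t ht => (hK'slice t ht).2) hBint
  calc ∫ x, g x * ∫ t in Ioo (0:ℝ) 1, ω t • f (t • x)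
      = ∫ x, ∫ t, K t x ∂μt := by
        refine integral_congr_ae (Filter.Eventually.of_forall fun x => ?_)
        dsimp only
        rw [← integral_const_mul]
        simp only [hKdef, mul_smul_comm]
        rfl
    _ = ∫ t, (∫ x, K t x) ∂μt := integral_integral_swap hKint.swap
    _ = ∫ t, (∫ x, K' t x) ∂μt := by
        refine integral_congr_ae ?_
        filter_upwards [ae_restrict_mem measurableSet_Ioo] with t ht
        have ht0 : (0:ℝ) < t := ht.1
        have key : ∀ x : EuclideanSpace ℝ (Fin n),
            K t x = ω t • ((fun y => g (t⁻¹ • y) * f y) (t • x)) := by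
          intro x; simp only [hKdef]; rw [inv_smul_smul₀ ht0.ne']
        calc ∫ x, K t x = ∫ x, ω t • ((fun y => g (t⁻¹ • y) * f y) (t • x)) := by
              simp only [key]
          _ = ω t • ∫ x, (fun y => g (t⁻¹ • y) * f y) (t • x) := integral_smul _ _
          _ = ω t • (|((t ^ n : ℝ))⁻¹| • ∫ y, g (t⁻¹ • y) * f y) := by
              rw [Measure.integral_comp_smul volume (fun y => g (t⁻¹ • y) * f y) t, hrank]
          _ = ∫ x, K' t x := by
              simp only [hK'def]
              rw [integral_smul, smul_smul]
              congr 1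
              · rw [abs_of_pos (show (0:ℝ) < (t ^ n)⁻¹ by positivity), zpow_neg, zpow_natCast]
              · exact integral_congr_ae (Filter.Eventually.of_forall fun y => mul_comm _ _)
    _ = ∫ x, ∫ t, K' t x ∂μt := integral_integral_swap hK'int
    _ = ∫ x, f x * ∫ t in Ioo (0:ℝ) 1, (ω t * t ^ (-(n:ℤ))) • g (t⁻¹ • x) := by
        refine integral_congr_ae (Filter.Eventually.of_forall fun x => ?_)
        dsimp only
        rw [← integral_const_mul]
        simp only [hK'def, mul_smul_comm]
        rfl

/-- Duality (4.1): `∫ g · H_ω f = ∫ f · G_ω g` for `f ∈ L^p`, `g ∈ L^q`, `1/p + 1/q = 1`,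
where `H_ω f(x) = ∫₀¹ f(tx) ω(t) dt` and `G_ω g(x) = ∫₀¹ g(x/t) t^{-n} ω(t) dt`. -/
theorem hardy_cesaro_duality (n : ℕ) (p q : ℝ) (hp : 1 < p) (hpq : 1/p + 1/q = 1)
    (ω : ℝ → ℝ) (hωm : Measurable ω) (hωnn : ∀ t ∈ Icc (0:ℝ) 1, 0 ≤ ω t)
    (hωint : IntegrableOn ω (Icc (0:ℝ) 1))
    (hA : IntegrableOn (fun t => t ^ (-(n:ℝ)/p) * ω t) (Ioo 0 1))
    (f g : EuclideanSpace ℝ (Fin n) → ℂ)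
    (hf : MemLp f (ENNReal.ofReal p) volume) (hg : MemLp g (ENNReal.ofReal q) volume) :
    ∫ x, g x * ∫ t in Ioo (0:ℝ) 1, ω t • f (t • x) =
      ∫ x, f x * ∫ t in Ioo (0:ℝ) 1, (ω t * t ^ (-(n:ℤ))) • g (t⁻¹ • x) := by
  obtain ⟨f', hf'm, hff'⟩ : ∃ f', StronglyMeasurable f' ∧ f =ᵐ[volume] f' :=
    ⟨hf.1.mk f, hf.1.stronglyMeasurable_mk, hf.1.ae_eq_mk⟩
  obtain ⟨g', hg'm, hgg'⟩ : ∃ g', StronglyMeasurable g' ∧ g =ᵐ[volume] g' :=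
    ⟨hg.1.mk g, hg.1.stronglyMeasurable_mk, hg.1.ae_eq_mk⟩
  have hf' : MemLp f' (ENNReal.ofReal p) volume := hf.ae_eq hff'
  have hg' : MemLp g' (ENNReal.ofReal q) volume := hg.ae_eq hgg'
  have key := aux_main n p q hp hpq ω hωm hωnn hA f' g' hf'm hg'm hf' hg'
  have hL : ∫ x, g x * ∫ t in Ioo (0:ℝ) 1, ω t • f (t • x)
      = ∫ x, g' x * ∫ t in Ioo (0:ℝ) 1, ω t • f' (t • x) := by
    refine integral_congr_ae ?_
    filter_upwards [hgg', aux_ae_ae f f' hff' (fun t => t) measurable_id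
      (fun t ht => ht.1.ne')] with x hgx hfx
    rw [hgx]
    congr 1
    refine integral_congr_ae ?_
    filter_upwards [hfx] with t hteq
    rw [hteq]
  have hR : ∫ x, f x * ∫ t in Ioo (0:ℝ) 1, (ω t * t ^ (-(n:ℤ))) • g (t⁻¹ • x)
      = ∫ x, f' x * ∫ t in Ioo (0:ℝ) 1, (ω t * t ^ (-(n:ℤ))) • g' (t⁻¹ • x) := by
    refine integral_congr_ae ?_
    filter_upwards [hff', aux_ae_ae g g' hgg' (fun t => t⁻¹) measurable_inv
      (fun t ht => inv_ne_zero ht.1.ne')] with x hfx hgx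
    rw [hfx]
    congr 1
    refine integral_congr_ae ?_
    filter_upwards [hgx] with t hteq
    rw [hteq]
  rw [hL, hR]
  exact key
end
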